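/- arXiv:1905.10820 — 4 statements merged into one kernel-verified Lean document; each statement's English description precedes it below -/
import Mathlib

section
/- For p in (1,2], t in (0,1), and vectors v, w in ℓ^p: ‖t•v + (1-t)•w‖_p^2 ≤ t‖v‖_p^2 + (1-t)‖w‖_p^2 − (p−1)·t·(1−t)·‖v−w‖_p^2. -/
open scoped ENNReal

open Real Set Filter
open scoped Topology

section BCLAux
variable {q : ℝ}

private lemma bcl_chi_nonneg (hq1 : 1 < q) (hq2 : q ≤ 2) {r : ℝ} (hr0 : 0 < r) (hr1 : r < 1) :
    2 * (1 + (q-1)*r^2) ^ (q/2 - 2) * (1 + (q-1)^2 * r^2) ≤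
      (1+r) ^ (q-2) + (1-r) ^ (q-2) := by
  have hA : (0:ℝ) < 1 + (q-1)*r^2 := by nlinarith
  have h1 : 1 + (q-1)^2*r^2 ≤ (1 + (q-1)*r^2) ^ (2 - q/2) := by
    calc 1 + (q-1)^2*r^2 ≤ 1 + (2 - q/2) * ((q-1)*r^2) := by
          nlinarith [mul_nonneg (mul_nonneg (by linarith : (0:ℝ) ≤ q - 1)
            (by linarith : (0:ℝ) ≤ 3 - 3*q/2)) (sq_nonneg r)]
    _ ≤ (1 + (q-1)*r^2) ^ (2 - q/2) :=
        one_add_mul_self_le_rpow_one_add (by nlinarith) (by linarith)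
  have h2 : 2 * (1 + (q-1)*r^2) ^ (q/2 - 2) * (1 + (q-1)^2 * r^2) ≤ 2 := by
    have := mul_le_mul_of_nonneg_left h1 (le_of_lt (rpow_pos_of_pos hA (q/2-2)))
    calc 2 * (1 + (q-1)*r^2) ^ (q/2 - 2) * (1 + (q-1)^2 * r^2)
        ≤ 2 * ((1 + (q-1)*r^2) ^ (q/2 - 2) * (1 + (q-1)*r^2) ^ (2 - q/2)) := by
          rw [mul_assoc]; exact mul_le_mul_of_nonneg_left this (by norm_num)
      _ = 2 := by rw [← Real.rpow_add hA]; norm_num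
  have h3 : (2:ℝ) ≤ (1+r) ^ (q-2) + (1-r) ^ (q-2) := by
    set x := (1+r) ^ ((q-2)/2) with hx
    set y := (1-r) ^ ((q-2)/2) with hy
    have hxx : x^2 = (1+r) ^ (q-2) := by
      rw [hx, ← Real.rpow_natCast _ 2, ← Real.rpow_mul (by linarith)]; norm_num
    have hyy : y^2 = (1-r) ^ (q-2) := by
      rw [hy, ← Real.rpow_natCast _ 2, ← Real.rpow_mul (by linarith)]; norm_num
    have hxy : x * y = ((1+r)*(1-r)) ^ ((q-2)/2) := (Real.mul_rpow (by linarith) (by linarith)).symm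
    have h1xy : (1:ℝ) ≤ x * y := by
      rw [hxy]
      exact Real.one_le_rpow_of_pos_of_le_one_of_nonpos (by nlinarith) (by nlinarith) (by linarith)
    nlinarith [sq_nonneg (x - y)]
  linarith

private lemma bcl_hasDerivAt_phi (hq1 : 1 < q) {r : ℝ} (hr0 : 0 < r) (hr1 : r < 1) :
    HasDerivAt (fun r : ℝ => (1+r) ^ q + (1-r) ^ q - 2 * (1 + (q-1)*r^2) ^ (q/2))
      (q * (1+r) ^ (q-1) - q * (1-r) ^ (q-1)
        - 2 * (q * (q-1) * r * (1 + (q-1)*r^2) ^ (q/2 - 1))) r := by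
  have h1 : HasDerivAt (fun r : ℝ => (1+r) ^ q) (q * (1+r) ^ (q-1)) r := by
    have := (HasDerivAt.const_add 1 (hasDerivAt_id r)).rpow_const
      (p := q) (Or.inl (by positivity))
    simpa using this
  have h2 : HasDerivAt (fun r : ℝ => (1-r) ^ q) (-(q * (1-r) ^ (q-1))) r := by
    have hd : HasDerivAt (fun r : ℝ => 1 - r) (-1) r := by
      simpa using (hasDerivAt_id r).const_sub 1
    have := hd.rpow_const (p := q) (Or.inl (by nlinarith))
    convert this using 1 <;> ring
  have h3 : HasDerivAt (fun r : ℝ => (1 + (q-1)*r^2) ^ (q/2))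
      (q * (q-1) * r * (1 + (q-1)*r^2) ^ (q/2 - 1)) r := by
    have hd : HasDerivAt (fun r : ℝ => 1 + (q-1)*r^2) ((q-1) * (2*r)) r := by
      have := ((hasDerivAt_pow 2 r).const_mul (q-1)).const_add 1
      simpa using this
    have hA : (0:ℝ) < 1 + (q-1)*r^2 := by nlinarith
    have := hd.rpow_const (p := q/2) (Or.inl (by positivity))
    convert this using 1 <;> ring
  exact ((h1.add h2).sub (h3.const_mul 2)).congr_deriv (by ring)

private lemma bcl_hasDerivAt_psi (hq1 : 1 < q) {r : ℝ} (hr0 : 0 < r) (hr1 : r < 1) :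
    HasDerivAt (fun r : ℝ => q * (1+r) ^ (q-1) - q * (1-r) ^ (q-1)
        - 2 * (q * (q-1) * r * (1 + (q-1)*r^2) ^ (q/2 - 1)))
      (q * (q-1) * ((1+r) ^ (q-2) + (1-r) ^ (q-2))
        - 2 * (q * (q-1) * ((1 + (q-1)*r^2) ^ (q/2 - 2) * (1 + (q-1)^2*r^2)))) r := by
  have hA : (0:ℝ) < 1 + (q-1)*r^2 := by nlinarith
  have h1 : HasDerivAt (fun r : ℝ => (1+r) ^ (q-1)) ((q-1) * (1+r) ^ (q-2)) r := by
    have := (HasDerivAt.const_add 1 (hasDerivAt_id r)).rpow_const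
      (p := q-1) (Or.inl (by positivity))
    refine this.congr_deriv ?_
    · rw [show q - 1 - 1 = q - 2 by ring]; simp only [id_eq]; ring
  have h2 : HasDerivAt (fun r : ℝ => (1-r) ^ (q-1)) (-((q-1) * (1-r) ^ (q-2))) r := by
    have hd : HasDerivAt (fun r : ℝ => 1 - r) (-1) r := by
      simpa using (hasDerivAt_id r).const_sub 1
    have := hd.rpow_const (p := q-1) (Or.inl (by nlinarith))
    convert this using 1
    · rw [show q - 1 - 1 = q - 2 by ring]; ring
  have h3 : HasDerivAt (fun r : ℝ => r * (1 + (q-1)*r^2) ^ (q/2 - 1))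
      ((1 + (q-1)*r^2) ^ (q/2 - 1) + r * ((q-1) * (2*r) * (q/2-1) * (1 + (q-1)*r^2) ^ (q/2 - 2))) r := by
    have hd : HasDerivAt (fun r : ℝ => 1 + (q-1)*r^2) ((q-1) * (2*r)) r := by
      have := ((hasDerivAt_pow 2 r).const_mul (q-1)).const_add 1
      simpa using this
    have hpow := hd.rpow_const (p := q/2 - 1) (Or.inl (by positivity))
    have := (hasDerivAt_id r).mul hpow
    refine this.congr_deriv ?_
    · rw [show q/2 - 1 - 1 = q/2 - 2 by ring]; simp only [id_eq]; ring
  have key := ((h1.const_mul q).sub (h2.const_mul q)).sub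
      ((h3.const_mul (q * (q-1))).const_mul 2)
  have heq : (fun r : ℝ => q * (1+r) ^ (q-1) - q * (1-r) ^ (q-1)
        - 2 * (q * (q-1) * r * (1 + (q-1)*r^2) ^ (q/2 - 1)))
      = (fun r : ℝ => q * (1+r) ^ (q-1) - q * (1-r) ^ (q-1)
        - 2 * (q * (q-1) * (r * (1 + (q-1)*r^2) ^ (q/2 - 1)))) := by
    funext s; ring
  rw [heq]
  refine key.congr_deriv ?_
  have hsplit : (1 + (q-1)*r^2) ^ (q/2 - 1) = (1 + (q-1)*r^2) ^ (q/2 - 2) * (1 + (q-1)*r^2) := by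
    rw [← Real.rpow_add_one (ne_of_gt hA)]; ring_nf
  rw [hsplit]; ring

private lemma bcl_core (hq1 : 1 < q) (hq2 : q ≤ 2) {r : ℝ} (hr0 : 0 ≤ r) (hr1 : r ≤ 1) :
    2 * (1 + (q-1)*r^2) ^ (q/2) ≤ (1+r) ^ q + (1-r) ^ q := by
  have hApos : ∀ x : ℝ, (0:ℝ) < 1 + (q-1)*x^2 := fun x => by nlinarith [sq_nonneg x]
  have cA : Continuous fun x : ℝ => 1 + (q-1)*x^2 := by continuity
  have c1 : ∀ e : ℝ, 0 ≤ e → Continuous fun x : ℝ => (1+x) ^ e := fun e he =>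
    (continuous_const.add continuous_id).rpow_const (fun x => Or.inr he)
  have c2 : ∀ e : ℝ, 0 ≤ e → Continuous fun x : ℝ => (1-x) ^ e := fun e he =>
    (continuous_const.sub continuous_id).rpow_const (fun x => Or.inr he)
  have c3 : ∀ e : ℝ, Continuous fun x : ℝ => (1 + (q-1)*x^2) ^ e := fun e =>
    cA.rpow_const (fun x => Or.inl (ne_of_gt (hApos x)))
  set ψ : ℝ → ℝ := fun r => q * (1+r) ^ (q-1) - q * (1-r) ^ (q-1)
        - 2 * (q * (q-1) * r * (1 + (q-1)*r^2) ^ (q/2 - 1)) with hψ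
  set φ : ℝ → ℝ := fun r => (1+r) ^ q + (1-r) ^ q - 2 * (1 + (q-1)*r^2) ^ (q/2) with hφ
  have cψ : Continuous ψ := by
    refine ((continuous_const.mul (c1 (q-1) (by linarith))).sub
      (continuous_const.mul (c2 (q-1) (by linarith)))).sub ?_
    exact continuous_const.mul (((continuous_const.mul continuous_id).mul (c3 (q/2-1))))
  have cφ : Continuous φ := by
    refine ((c1 q (by linarith)).add (c2 q (by linarith))).sub (continuous_const.mul (c3 (q/2)))
  have hψ0 : ψ 0 = 0 := by
    simp only [hψ]; norm_num
  have hmonoψ : MonotoneOn ψ (Icc 0 1) := by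
    refine monotoneOn_of_deriv_nonneg (convex_Icc 0 1) cψ.continuousOn ?_ ?_
    · intro x hx
      rw [interior_Icc] at hx
      exact (bcl_hasDerivAt_psi hq1 hx.1 hx.2).differentiableAt.differentiableWithinAt
    · intro x hx
      rw [interior_Icc] at hx
      rw [(bcl_hasDerivAt_psi hq1 hx.1 hx.2).deriv]
      have h := bcl_chi_nonneg hq1 hq2 hx.1 hx.2
      have hq0 : (0:ℝ) ≤ q * (q-1) := by nlinarith
      nlinarith [mul_le_mul_of_nonneg_left h hq0]
  have hψnn : ∀ x ∈ Icc (0:ℝ) 1, 0 ≤ ψ x := fun x hx => by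
    have := hmonoψ (left_mem_Icc.2 zero_le_one) hx hx.1
    linarith [hψ0 ▸ this]
  have hφ0 : φ 0 = 0 := by
    simp only [hφ]; norm_num
  have hmonoφ : MonotoneOn φ (Icc 0 1) := by
    refine monotoneOn_of_deriv_nonneg (convex_Icc 0 1) cφ.continuousOn ?_ ?_
    · intro x hx
      rw [interior_Icc] at hx
      exact (bcl_hasDerivAt_phi hq1 hx.1 hx.2).differentiableAt.differentiableWithinAt
    · intro x hx
      rw [interior_Icc] at hx
      rw [(bcl_hasDerivAt_phi hq1 hx.1 hx.2).deriv]
      exact hψnn x ⟨hx.1.le, hx.2.le⟩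
  have := hmonoφ (left_mem_Icc.2 zero_le_one) ⟨hr0, hr1⟩ hr0
  rw [hφ0] at this
  simp only [hφ] at this
  linarith


private lemma bcl_aux (hq1 : 1 < q) (hq2 : q ≤ 2) {u d : ℝ} (hd : 0 ≤ d) (hdu : d ≤ u) :
    (u^2 + (q-1)*d^2) ^ (q/2) ≤ ((u+d) ^ q + (u-d) ^ q) / 2 := by
  have hu : 0 ≤ u := le_trans hd hdu
  rcases eq_or_lt_of_le hu with h0 | hupos
  · have hd0 : d = 0 := le_antisymm (by linarith) hd
    rw [← h0, hd0, show (0:ℝ)^2 + (q-1)*0^2 = 0 by ring, show (0:ℝ)+0 = 0 by ring,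
      show (0:ℝ)-0 = 0 by ring, Real.zero_rpow (by positivity : q/2 ≠ 0),
      Real.zero_rpow (by positivity : q ≠ 0)]
    norm_num
  · set r := d / u with hr
    have hr0 : 0 ≤ r := div_nonneg hd hu
    have hr1 : r ≤ 1 := (div_le_one hupos).2 hdu
    have core := bcl_core hq1 hq2 hr0 hr1
    have huq : (0:ℝ) < u ^ q := rpow_pos_of_pos hupos q
    have e0 : (u^2 : ℝ) ^ (q/2) = u ^ q := by
      rw [← Real.rpow_natCast u 2, ← Real.rpow_mul hu,
        show ((2:ℕ):ℝ) * (q/2) = q by push_cast; ring]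
    have e1 : u ^ q * (1 + (q-1)*r^2) ^ (q/2) = (u^2 + (q-1)*d^2) ^ (q/2) := by
      rw [← e0, ← Real.mul_rpow (by positivity) (by nlinarith [sq_nonneg r])]
      congr 1
      rw [hr]; field_simp
    have e2 : u ^ q * (1+r) ^ q = (u+d) ^ q := by
      rw [← Real.mul_rpow hu (by linarith)]
      congr 1
      rw [hr]; field_simp
    have e3 : u ^ q * (1-r) ^ q = (u-d) ^ q := by
      rw [← Real.mul_rpow hu (by linarith)]
      congr 1
      rw [hr]; field_simp
    have := mul_le_mul_of_nonneg_left core huq.le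
    rw [mul_add, e2, e3] at this
    nlinarith [e1]

private lemma bcl_aux2 (hq1 : 1 < q) (hq2 : q ≤ 2) {u d : ℝ} (hu : 0 ≤ u) (hd : 0 ≤ d) :
    (u^2 + (q-1)*d^2) ^ (q/2) ≤ (|u+d| ^ q + |u-d| ^ q) / 2 := by
  rcases le_total d u with h | h
  · rw [abs_of_nonneg (by linarith), abs_of_nonneg (by linarith)]
    exact bcl_aux hq1 hq2 hd h
  · rw [abs_of_nonneg (by linarith), abs_of_nonpos (by linarith),
      show -(u-d) = d - u by ring, show u + d = d + u by ring]
    calc (u^2 + (q-1)*d^2) ^ (q/2) ≤ (d^2 + (q-1)*u^2) ^ (q/2) := by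
          apply Real.rpow_le_rpow (by nlinarith [sq_nonneg u, sq_nonneg d]) ?_ (by positivity)
          nlinarith [mul_nonneg (by linarith : (0:ℝ) ≤ 2 - q)
            (mul_nonneg (sub_nonneg.2 h) (by linarith : (0:ℝ) ≤ d + u))]
      _ ≤ ((d+u) ^ q + (d-u) ^ q) / 2 := bcl_aux hq1 hq2 hu h

private lemma bcl_scalar (hq1 : 1 < q) (hq2 : q ≤ 2) (u d : ℝ) :
    (u^2 + (q-1)*d^2) ^ (q/2) ≤ (|u+d| ^ q + |u-d| ^ q) / 2 := by
  rcases le_total 0 u with hu | hu <;> rcases le_total 0 d with hd | hd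
  · exact bcl_aux2 hq1 hq2 hu hd
  · have := bcl_aux2 hq1 hq2 hu (neg_nonneg.2 hd)
    rw [show u + -d = u - d by ring, show u - -d = u + d by ring, neg_pow] at this
    calc (u^2 + (q-1)*d^2) ^ (q/2) = (u^2 + (q-1)*((-1)^2*d^2)) ^ (q/2) := by norm_num
    _ ≤ (|u-d| ^ q + |u+d| ^ q)/2 := by convert this using 4
    _ = (|u+d| ^ q + |u-d| ^ q)/2 := by ring
  · have := bcl_aux2 hq1 hq2 (neg_nonneg.2 hu) hd
    rw [show -u + d = -(u - d) by ring, show -u - d = -(u + d) by ring, abs_neg, abs_neg] at this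
    calc (u^2 + (q-1)*d^2) ^ (q/2) = ((-u)^2 + (q-1)*d^2) ^ (q/2) := by norm_num
    _ ≤ (|u-d| ^ q + |u+d| ^ q)/2 := this
    _ = (|u+d| ^ q + |u-d| ^ q)/2 := by ring
  · have := bcl_aux2 hq1 hq2 (neg_nonneg.2 hu) (neg_nonneg.2 hd)
    rw [show -u + -d = -(u + d) by ring, show -u - -d = -(u - d) by ring, abs_neg, abs_neg] at this
    calc (u^2 + (q-1)*d^2) ^ (q/2) = ((-u)^2 + (q-1)*(-d)^2) ^ (q/2) := by norm_num
    _ ≤ (|u+d| ^ q + |u-d| ^ q)/2 := this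

end BCLAux

private lemma rpow_add_le_rpow_add_rpow {s x y : ℝ} (hx : 0 ≤ x) (hy : 0 ≤ y)
    (hs0 : 0 < s) (hs1 : s ≤ 1) : (x + y) ^ s ≤ x ^ s + y ^ s := by
  rcases eq_or_lt_of_le hx with h0 | hxpos
  · simp [← h0, Real.zero_rpow (ne_of_gt hs0)]
  rcases eq_or_lt_of_le hy with h0 | hypos
  · simp [← h0, Real.zero_rpow (ne_of_gt hs0)]
  have hT : (0:ℝ) < x + y := by linarith
  have key0 : (x+y) ^ (s-1) * (x+y) = (x+y) ^ s := by
    rw [← Real.rpow_add_one (ne_of_gt hT)]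
    ring_nf
  have key : (x+y) ^ s = x * (x+y) ^ (s-1) + y * (x+y) ^ (s-1) := by
    rw [← key0]; ring
  rw [key]
  have h1 : (x+y) ^ (s-1) ≤ x ^ (s-1) :=
    Real.rpow_le_rpow_of_nonpos hxpos (by linarith) (by linarith)
  have h2 : (x+y) ^ (s-1) ≤ y ^ (s-1) :=
    Real.rpow_le_rpow_of_nonpos hypos (by linarith) (by linarith)
  have e1 : x * x ^ (s-1) = x ^ s := by
    rw [← Real.rpow_one_add' (le_of_lt hxpos) (by intro h; linarith [h])]
    · ring_nf
  have e2 : y * y ^ (s-1) = y ^ s := by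
    rw [← Real.rpow_one_add' (le_of_lt hypos) (by intro h; linarith [h])]
    · ring_nf
  calc x * (x+y)^(s-1) + y * (x+y)^(s-1)
      ≤ x * x^(s-1) + y * y^(s-1) := by
        gcongr
    _ = x ^ s + y ^ s := by rw [e1, e2]

/-- pointwise weighted lemma for reverse Minkowski -/
private lemma rev_mink_pointwise {s θ x y : ℝ} (hx : 0 ≤ x) (hy : 0 ≤ y)
    (hs0 : 0 < s) (hs1 : s ≤ 1) (hθ0 : 0 ≤ θ) (hθ1 : θ ≤ 1) :
    θ ^ (1-s) * x ^ s + (1-θ) ^ (1-s) * y ^ s ≤ (x + y) ^ s := by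
  rcases eq_or_lt_of_le (add_nonneg hx hy) with h0 | hT
  · have hx0 : x = 0 := by linarith
    have hy0 : y = 0 := by linarith
    simp [hx0, hy0, Real.zero_rpow (ne_of_gt hs0)]
  have g1 : θ ^ (1-s) * (x/(x+y)) ^ s ≤ (1-s)*θ + s*(x/(x+y)) :=
    Real.geom_mean_le_arith_mean2_weighted (by linarith) (le_of_lt hs0) hθ0 (by positivity)
      (by ring)
  have g2 : (1-θ) ^ (1-s) * (y/(x+y)) ^ s ≤ (1-s)*(1-θ) + s*(y/(x+y)) :=
    Real.geom_mean_le_arith_mean2_weighted (by linarith) (le_of_lt hs0) (by linarith)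
      (by positivity) (by ring)
  have hsum : (x/(x+y)) + (y/(x+y)) = 1 := by field_simp
  have hbound : θ ^ (1-s) * (x/(x+y)) ^ s + (1-θ) ^ (1-s) * (y/(x+y)) ^ s ≤ 1 := by
    calc _ ≤ ((1-s)*θ + s*(x/(x+y))) + ((1-s)*(1-θ) + s*(y/(x+y))) := add_le_add g1 g2
    _ = (1-s) + s*((x/(x+y)) + (y/(x+y))) := by ring
    _ = 1 := by rw [hsum]; ring
  have hxe : x ^ s = (x/(x+y)) ^ s * (x+y) ^ s := by
    rw [← Real.mul_rpow (by positivity) (le_of_lt hT)]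
    congr 1
    field_simp
  have hye : y ^ s = (y/(x+y)) ^ s * (x+y) ^ s := by
    rw [← Real.mul_rpow (by positivity) (le_of_lt hT)]
    congr 1
    field_simp
  have hTs : (0:ℝ) < (x+y) ^ s := rpow_pos_of_pos hT s
  calc θ ^ (1-s) * x ^ s + (1-θ) ^ (1-s) * y ^ s
      = (θ ^ (1-s) * (x/(x+y)) ^ s + (1-θ) ^ (1-s) * (y/(x+y)) ^ s) * (x+y) ^ s := by
        rw [hxe, hye]; ring
    _ ≤ 1 * (x+y) ^ s := by
        exact mul_le_mul_of_nonneg_right hbound (le_of_lt hTs)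
    _ = (x+y) ^ s := by ring

private lemma rev_minkowski {s : ℝ} (hs0 : 0 < s) (hs1 : s ≤ 1) {a b : ℕ → ℝ}
    (ha : ∀ i, 0 ≤ a i) (hb : ∀ i, 0 ≤ b i)
    (hsa : Summable fun i => (a i) ^ s) (hsb : Summable fun i => (b i) ^ s) :
    (∑' i, (a i) ^ s) ^ (1/s) + (∑' i, (b i) ^ s) ^ (1/s)
      ≤ (∑' i, (a i + b i) ^ s) ^ (1/s) := by
  have hsab : Summable fun i => (a i + b i) ^ s := by
    refine Summable.of_nonneg_of_le (fun i => Real.rpow_nonneg (add_nonneg (ha i) (hb i)) s)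
      (fun i => rpow_add_le_rpow_add_rpow (ha i) (hb i) hs0 hs1) (hsa.add hsb)
  set Sa := ∑' i, (a i) ^ s with hSa
  set Sb := ∑' i, (b i) ^ s with hSb
  set S := ∑' i, (a i + b i) ^ s with hS
  have hSa0 : 0 ≤ Sa := tsum_nonneg (fun i => Real.rpow_nonneg (ha i) s)
  have hSb0 : 0 ≤ Sb := tsum_nonneg (fun i => Real.rpow_nonneg (hb i) s)
  have hS0 : 0 ≤ S := tsum_nonneg (fun i => Real.rpow_nonneg (add_nonneg (ha i) (hb i)) s)
  have hmonoa : Sa ≤ S := by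
    refine Summable.tsum_le_tsum (fun i => ?_) hsa hsab
    exact Real.rpow_le_rpow (ha i) (by linarith [hb i]) (le_of_lt hs0)
  have hmonob : Sb ≤ S := by
    refine Summable.tsum_le_tsum (fun i => ?_) hsb hsab
    exact Real.rpow_le_rpow (hb i) (by linarith [ha i]) (le_of_lt hs0)
  rcases eq_or_lt_of_le hSa0 with h0 | hSapos
  · rw [← h0, Real.zero_rpow (by positivity : 1/s ≠ 0), zero_add]
    exact Real.rpow_le_rpow hSb0 hmonob (by positivity)
  rcases eq_or_lt_of_le hSb0 with h0 | hSbpos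
  · rw [← h0, Real.zero_rpow (by positivity : 1/s ≠ 0), add_zero]
    exact Real.rpow_le_rpow hSa0 hmonoa (by positivity)
  set A := Sa ^ (1/s) with hA
  set B := Sb ^ (1/s) with hB
  have hApos : 0 < A := rpow_pos_of_pos hSapos _
  have hBpos : 0 < B := rpow_pos_of_pos hSbpos _
  have hABpos : 0 < A + B := by linarith
  set θ := A / (A + B) with hθ
  have hθ0 : 0 ≤ θ := by positivity
  have hθ1 : θ ≤ 1 := by rw [hθ, div_le_one hABpos]; linarith
  have hpt : ∀ i, θ ^ (1-s) * (a i) ^ s + (1-θ) ^ (1-s) * (b i) ^ s ≤ (a i + b i) ^ s :=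
    fun i => rev_mink_pointwise (ha i) (hb i) hs0 hs1 hθ0 hθ1
  have hsum_le : θ ^ (1-s) * Sa + (1-θ) ^ (1-s) * Sb ≤ S := by
    have := Summable.tsum_le_tsum hpt ((hsa.mul_left _).add (hsb.mul_left _)) hsab
    rwa [Summable.tsum_add (hsa.mul_left _) (hsb.mul_left _), tsum_mul_left, tsum_mul_left] at this
  -- identify LHS with (A+B)^s
  have hAs : A ^ s = Sa := by
    rw [hA, ← Real.rpow_mul hSa0, one_div, inv_mul_cancel₀ (ne_of_gt hs0), Real.rpow_one]
  have hBs : B ^ s = Sb := by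
    rw [hB, ← Real.rpow_mul hSb0, one_div, inv_mul_cancel₀ (ne_of_gt hs0), Real.rpow_one]
  have h1θ : 1 - θ = B / (A + B) := by rw [hθ]; field_simp; ring
  have key : (A + B) ^ s ≤ S := by
    have eθ : θ ^ (1-s) * Sa = A / (A+B) ^ (1-s) := by
      rw [← hAs, hθ, Real.div_rpow (le_of_lt hApos) (le_of_lt hABpos), div_mul_eq_mul_div,
        ← Real.rpow_add hApos]
      norm_num
    have eθ' : (1-θ) ^ (1-s) * Sb = B / (A+B) ^ (1-s) := by
      rw [← hBs, h1θ, Real.div_rpow (le_of_lt hBpos) (le_of_lt hABpos), div_mul_eq_mul_div,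
        ← Real.rpow_add hBpos]
      norm_num
    have eAB : A / (A+B) ^ (1-s) + B / (A+B) ^ (1-s) = (A+B) ^ s := by
      rw [← add_div, eq_comm, eq_div_iff (ne_of_gt (rpow_pos_of_pos hABpos _)),
        ← Real.rpow_add hABpos]
      norm_num
    calc (A+B) ^ s = θ ^ (1-s) * Sa + (1-θ) ^ (1-s) * Sb := by rw [eθ, eθ', eAB]
      _ ≤ S := hsum_le
  calc A + B = ((A+B) ^ s) ^ (1/s) := by
        rw [← Real.rpow_mul (le_of_lt hABpos), mul_one_div, div_self (ne_of_gt hs0),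
          Real.rpow_one]
    _ ≤ S ^ (1/s) := Real.rpow_le_rpow (by positivity) key (by positivity)

private lemma sq_rpow_half {q : ℝ} (hq : 0 < q) (x : ℝ) : ((x^2 : ℝ)) ^ (q/2) = |x| ^ q := by
  rw [← sq_abs, ← Real.rpow_natCast |x| 2, ← Real.rpow_mul (abs_nonneg x),
    show ((2:ℕ):ℝ) * (q/2) = q by push_cast; ring]

private lemma bcl_midpoint (p : ℝ≥0∞) [Fact (1 ≤ p)] (hp1 : 1 < p) (hp2 : p ≤ 2)
    (u d : lp (fun _ : ℕ => ℝ) p) :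
    ‖u‖^2 + (p.toReal - 1) * ‖d‖^2 ≤ (‖u + d‖^2 + ‖u - d‖^2) / 2 := by
  have hpne : p ≠ ⊤ := ne_of_lt (lt_of_le_of_lt hp2 (by norm_num))
  set q := p.toReal with hq
  have hq1 : 1 < q := by
    rw [hq, ← ENNReal.toReal_one]
    exact (ENNReal.toReal_lt_toReal (by norm_num) hpne).2 hp1
  have hq2 : q ≤ 2 := by
    rw [hq, show (2:ℝ) = (2:ℝ≥0∞).toReal by simp]
    exact (ENNReal.toReal_le_toReal hpne (by norm_num)).2 hp2
  have hq0 : 0 < q := by linarith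
  -- summability facts
  have hsum : ∀ x : lp (fun _ : ℕ => ℝ) p, Summable fun i => ‖x i‖ ^ q :=
    fun x => (lp.memℓp x).summable hq0
  have hnn : ∀ x : lp (fun _ : ℕ => ℝ) p, ∀ i, (0:ℝ) ≤ ‖x i‖ ^ q :=
    fun x i => Real.rpow_nonneg (norm_nonneg _) q
  -- norm squared formula
  have norm_sq : ∀ x : lp (fun _ : ℕ => ℝ) p, ‖x‖^2 = (∑' i, ‖x i‖ ^ q) ^ (2/q) := by
    intro x
    rw [lp.norm_eq_tsum_rpow hq0 x, ← Real.rpow_natCast _ 2,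
      ← Real.rpow_mul (tsum_nonneg (hnn x)), show (1/q) * ((2:ℕ):ℝ) = 2/q by push_cast; ring]
  set S1 := ∑' i, ‖(u + d) i‖ ^ q with hS1
  set S2 := ∑' i, ‖(u - d) i‖ ^ q with hS2
  have hS1nn : 0 ≤ S1 := tsum_nonneg (hnn _)
  have hS2nn : 0 ≤ S2 := tsum_nonneg (hnn _)
  -- pointwise scalar inequality
  have hpt : ∀ i, ((u i)^2 + (q-1)*(d i)^2) ^ (q/2) ≤ (‖(u+d) i‖ ^ q + ‖(u-d) i‖ ^ q)/2 := by
    intro i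
    have h1 : (u + d) i = u i + d i := by rw [lp.coeFn_add]; rfl
    have h2 : (u - d) i = u i - d i := by rw [lp.coeFn_sub]; rfl
    rw [h1, h2, Real.norm_eq_abs, Real.norm_eq_abs]
    exact bcl_scalar hq1 hq2 (u i) (d i)
  have hsumT : Summable fun i => ((u i)^2 + (q-1)*(d i)^2) ^ (q/2) := by
    refine Summable.of_nonneg_of_le
      (fun i => Real.rpow_nonneg (by nlinarith [sq_nonneg (u i), sq_nonneg (d i)]) _)
      hpt ?_
    exact ((hsum (u+d)).add (hsum (u-d))).div_const 2
  set T := ∑' i, ((u i)^2 + (q-1)*(d i)^2) ^ (q/2) with hT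
  have step1 : T ≤ (S1 + S2)/2 := by
    have := Summable.tsum_le_tsum hpt hsumT (((hsum (u+d)).add (hsum (u-d))).div_const 2)
    calc T ≤ ∑' i, (‖(u+d) i‖ ^ q + ‖(u-d) i‖ ^ q)/2 := this
      _ = (S1 + S2)/2 := by
          rw [tsum_div_const, Summable.tsum_add (hsum (u+d)) (hsum (u-d))]
  have hTnn : 0 ≤ T := tsum_nonneg
    (fun i => Real.rpow_nonneg (by nlinarith [sq_nonneg (u i), sq_nonneg (d i)]) _)
  -- step 2 : convexity
  have step2 : ((S1 + S2)/2) ^ (2/q) ≤ (S1 ^ (2/q) + S2 ^ (2/q))/2 := by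
    have hcx := (convexOn_rpow (by rw [le_div_iff₀ hq0]; linarith : (1:ℝ) ≤ 2/q)).2
      (mem_Ici.2 hS1nn) (mem_Ici.2 hS2nn)
      (by norm_num : (0:ℝ) ≤ 1/2) (by norm_num : (0:ℝ) ≤ 1/2) (by norm_num)
    simp only [smul_eq_mul] at hcx
    calc ((S1 + S2)/2) ^ (2/q) = (1/2*S1 + 1/2*S2) ^ (2/q) := by ring_nf
      _ ≤ 1/2*S1^(2/q) + 1/2*S2^(2/q) := hcx
      _ = (S1 ^ (2/q) + S2 ^ (2/q))/2 := by ring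
  -- step 3 : reverse Minkowski
  have hsa : Summable fun i => ((u i)^2 : ℝ) ^ (q/2) := by
    refine (hsum u).congr (fun i => ?_)
    rw [sq_rpow_half hq0, Real.norm_eq_abs]
  have hsb : Summable fun i => ((q-1)*(d i)^2 : ℝ) ^ (q/2) := by
    refine ((hsum d).mul_left ((q-1) ^ (q/2))).congr (fun i => ?_)
    rw [Real.mul_rpow (by linarith) (sq_nonneg _), sq_rpow_half hq0, Real.norm_eq_abs]
  have step3 : (∑' i, ((u i)^2 : ℝ) ^ (q/2)) ^ (1/(q/2))
      + (∑' i, ((q-1)*(d i)^2 : ℝ) ^ (q/2)) ^ (1/(q/2)) ≤ T ^ (1/(q/2)) := by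
    exact rev_minkowski (by positivity) (by linarith [hq2] : q/2 ≤ 1)
      (fun i => sq_nonneg _) (fun i => mul_nonneg (by linarith) (sq_nonneg _)) hsa hsb
  -- identify the three terms
  have inv_exp : 1/(q/2) = 2/q := by field_simp
  have eu : (∑' i, ((u i)^2 : ℝ) ^ (q/2)) ^ (1/(q/2)) = ‖u‖^2 := by
    rw [inv_exp, norm_sq u]
    congr 1
    exact tsum_congr (fun i => by rw [sq_rpow_half hq0, Real.norm_eq_abs])
  have ed : (∑' i, ((q-1)*(d i)^2 : ℝ) ^ (q/2)) ^ (1/(q/2)) = (q-1) * ‖d‖^2 := by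
    rw [inv_exp, norm_sq d]
    have e1 : (∑' i, ((q-1)*(d i)^2 : ℝ) ^ (q/2)) = (q-1)^(q/2) * ∑' i, ‖d i‖ ^ q := by
      rw [← tsum_mul_left]
      exact tsum_congr (fun i => by
        rw [Real.mul_rpow (by linarith) (sq_nonneg _), sq_rpow_half hq0, Real.norm_eq_abs])
    rw [e1, Real.mul_rpow (Real.rpow_nonneg (by linarith) _) (tsum_nonneg (hnn d)),
      ← Real.rpow_mul (by linarith : (0:ℝ) ≤ q - 1),
      show (q/2) * (2/q) = 1 by field_simp, Real.rpow_one]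
  have step3' : ‖u‖^2 + (q-1) * ‖d‖^2 ≤ T ^ (2/q) := by
    rw [← eu, ← ed, ← inv_exp]
    exact step3
  -- assemble
  calc ‖u‖^2 + (q-1) * ‖d‖^2 ≤ T ^ (2/q) := step3'
    _ ≤ ((S1 + S2)/2) ^ (2/q) := Real.rpow_le_rpow hTnn step1 (by positivity)
    _ ≤ (S1 ^ (2/q) + S2 ^ (2/q))/2 := step2
    _ = (‖u + d‖^2 + ‖u - d‖^2)/2 := by rw [← norm_sq (u+d), ← norm_sq (u-d)]

private lemma midpoint_concave_nonneg {g : ℝ → ℝ} (hcont : Continuous g)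
    (hmid : ∀ s t : ℝ, (g s + g t)/2 ≤ g ((s+t)/2)) (h0 : g 0 = 0) (h1 : g 1 = 0)
    {t : ℝ} (ht0 : 0 ≤ t) (ht1 : t ≤ 1) : 0 ≤ g t := by
  -- dyadic points
  have dyadic : ∀ n : ℕ, ∀ k : ℕ, k ≤ 2^n → 0 ≤ g ((k : ℝ) / 2^n) := by
    intro n
    induction n with
    | zero =>
      intro k hk
      interval_cases k
      · simpa using h0.ge
      · simpa using h1.ge
    | succ n ih =>
      intro k hk
      rcases Nat.even_or_odd k with ⟨m, hm⟩ | ⟨m, hm⟩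
      · have hm' : m ≤ 2^n := by omega
        have : ((k : ℝ) / 2^(n+1)) = (m : ℝ) / 2^n := by
          subst hm; push_cast; ring
        rw [this]
        exact ih m hm'
      · have hm' : m + 1 ≤ 2^n := by omega
        have hmid' := hmid ((m:ℝ)/2^n) (((m:ℝ)+1)/2^n)
        have e : (((m:ℝ)/2^n + ((m:ℝ)+1)/2^n)/2) = (k : ℝ) / 2^(n+1) := by
          subst hm; push_cast; ring
        rw [e] at hmid'
        have h1' := ih m (by omega)
        have h2' := ih (m+1) hm'
        push_cast at h2'
        linarith
  -- approximate t by dyadics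
  have htend : Tendsto (fun n : ℕ => (⌊t * 2^n⌋₊ : ℝ) / 2^n) atTop (𝓝 t) := by
    have hlow : ∀ n : ℕ, t - (1/2)^n ≤ (⌊t * 2^n⌋₊ : ℝ) / 2^n := by
      intro n
      have h2n : (0:ℝ) < 2^n := by positivity
      rw [sub_le_iff_le_add, div_add' _ _ _ (ne_of_gt h2n), le_div_iff₀ h2n]
      have := Nat.lt_floor_add_one (t * 2^n)
      have e : (1/2:ℝ)^n * 2^n = 1 := by
        rw [← mul_pow]; norm_num
      nlinarith [this]
    have hup : ∀ n : ℕ, (⌊t * 2^n⌋₊ : ℝ) / 2^n ≤ t := by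
      intro n
      have h2n : (0:ℝ) < 2^n := by positivity
      rw [div_le_iff₀ h2n]
      exact Nat.floor_le (by positivity)
    refine tendsto_of_tendsto_of_tendsto_of_le_of_le ?_ tendsto_const_nhds hlow hup
    have : Tendsto (fun n : ℕ => (1/2:ℝ)^n) atTop (𝓝 0) :=
      tendsto_pow_atTop_nhds_zero_of_lt_one (by norm_num) (by norm_num)
    simpa using tendsto_const_nhds.sub this
  have hgt : Tendsto (fun n : ℕ => g ((⌊t * 2^n⌋₊ : ℝ) / 2^n)) atTop (𝓝 (g t)) :=
    (hcont.tendsto t).comp htend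
  refine ge_of_tendsto hgt (Eventually.of_forall (fun n => ?_))
  refine dyadic n _ ?_
  have : t * 2^n ≤ ((2^n : ℕ) : ℝ) := by
    push_cast
    nlinarith [pow_pos (by norm_num : (0:ℝ) < 2) n]
  calc ⌊t * 2^n⌋₊ ≤ ⌊((2^n : ℕ) : ℝ)⌋₊ := Nat.floor_le_floor (by exact_mod_cast this)
    _ = 2^n := Nat.floor_natCast _

/-- For `p ∈ (1,2]` and `t ∈ (0,1)`, for all `v w ∈ ℓ^p`,
`‖t•v + (1-t)•w‖_p² ≤ t‖v‖_p² + (1-t)‖w‖_p² − (p−1)·t·(1−t)·‖v−w‖_p²`. -/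
theorem bcl_convex_combination (p : ℝ≥0∞) [Fact (1 ≤ p)] (hp1 : 1 < p) (hp2 : p ≤ 2)
    (t : ℝ) (ht : t ∈ Set.Ioo (0 : ℝ) 1) :
    ∀ v w : lp (fun _ : ℕ => ℝ) p,
      ‖t • v + (1 - t) • w‖ ^ 2 ≤
        t * ‖v‖ ^ 2 + (1 - t) * ‖w‖ ^ 2
          - (p.toReal - 1) * t * (1 - t) * ‖v - w‖ ^ 2 := by
  intro v w
  set q := p.toReal with hqdef
  set z : ℝ → lp (fun _ : ℕ => ℝ) p := fun s => s • v + (1 - s) • w with hz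
  set g : ℝ → ℝ := fun s =>
    s * ‖v‖^2 + (1-s) * ‖w‖^2 - (q - 1) * s * (1-s) * ‖v - w‖^2 - ‖z s‖^2 with hg
  have hcont : Continuous g := by
    have hzc : Continuous z := by
      exact (continuous_id.smul continuous_const).add
        ((continuous_const.sub continuous_id).smul continuous_const)
    have : Continuous fun s : ℝ => ‖z s‖^2 := (hzc.norm).pow 2
    fun_prop
  have hmid : ∀ s r : ℝ, (g s + g r)/2 ≤ g ((s+r)/2) := by
    intro s r
    have hzmid : z ((s+r)/2) = (2⁻¹ : ℝ) • (z s + z r) := by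
      simp only [hz]
      module
    have hdiff : z s - z r = (s - r) • (v - w) := by
      simp only [hz]
      module
    have key := bcl_midpoint p hp1 hp2 ((2⁻¹ : ℝ) • (z s + z r)) ((2⁻¹ : ℝ) • (z s - z r))
    have e1 : (2⁻¹ : ℝ) • (z s + z r) + (2⁻¹ : ℝ) • (z s - z r) = z s := by module
    have e2 : (2⁻¹ : ℝ) • (z s + z r) - (2⁻¹ : ℝ) • (z s - z r) = z r := by module
    rw [e1, e2] at key
    have e3 : ‖(2⁻¹ : ℝ) • (z s - z r)‖^2 = (s-r)^2/4 * ‖v - w‖^2 := by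
      rw [hdiff, norm_smul, norm_smul, mul_pow, mul_pow, Real.norm_eq_abs, Real.norm_eq_abs,
        sq_abs, sq_abs]
      norm_num
      ring
    rw [e3] at key
    have hnm : ‖z ((s+r)/2)‖^2 = ‖(2⁻¹ : ℝ) • (z s + z r)‖^2 := by rw [hzmid]
    simp only [hg]
    rw [hnm]
    nlinarith [key]
  have hz0 : z 0 = w := by
    simp only [hz]
    rw [zero_smul, zero_add, sub_zero, one_smul]
  have hz1 : z 1 = v := by
    simp only [hz]
    rw [sub_self, zero_smul, add_zero, one_smul]
  have h0 : g 0 = 0 := by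
    simp only [hg]
    rw [hz0]; ring
  have h1 : g 1 = 0 := by
    simp only [hg]
    rw [hz1]; ring
  have := midpoint_concave_nonneg hcont hmid h0 h1 ht.1.le ht.2.le
  simp only [hg, hz] at this
  linarith
end

section
/- Let 0 < l < j < 3j < k. Define curves μ, ν : [0,1] → ℝ²-multiset-space by μ(t) = {((k/2)t, (k/2)(2−t)), ((j/2)(3t), (j/2)(2−3t))} for t ∈ [0,1/3] and μ(t) = {((k/2)t, (k/2)(2−t))} for t ∈ [1/3,1], and ν analogously with l in place of j. Then μ and ν are geodesics from Y = {(0,k),(0,j)} and Z = {(0,k),(0,l)} respectively to the empty diagram in (D_∞[l^q], d_∞[l^q]) for every q ∈ [1,∞], they agree on [1/3, 1], and they differ on [0,1/3); hence d_∞[l^q] admits branching geodesics. -/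
open scoped ENNReal
open Set

noncomputable section

/-- The `q`-norm on `ℝ²`, for `q ∈ [1,∞]` (encoded as `q : ℝ≥0∞`). -/
def qnorm (q : ℝ≥0∞) (v : ℝ × ℝ) : ℝ :=
  if q = ∞ then max |v.1| |v.2|
  else (|v.1| ^ q.toReal + |v.2| ^ q.toReal) ^ (1 / q.toReal)

/-- The diagonal of `ℝ²`, counted with countably infinite multiplicity
(one copy for each index in `ℕ`). -/
def diagSet : Set ((ℝ × ℝ) × ℕ) := {x | x.1.1 = x.1.2}

/-- A persistence diagram: a subset of `ℝ² × ℕ` containing every copy of the diagonal,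
all of whose points lie on or above the diagonal, and with countably many
off-diagonal points. -/
structure Diagram where
  pts : Set ((ℝ × ℝ) × ℕ)
  diag_mem : diagSet ⊆ pts
  above : ∀ x ∈ pts, x.1.1 ≤ x.1.2
  countable_off : {x ∈ pts | x.1.1 < x.1.2}.Countable

/-- The empty diagram: only the diagonal, with countably infinite multiplicity. -/
def emptyD : Diagram where
  pts := diagSet
  diag_mem := le_refl _
  above := fun x hx => le_of_eq hx
  countable_off := Set.countable_empty.mono
    (fun _ hx => absurd hx.2 (not_lt.mpr (le_of_eq hx.1.symm)))

/-- The `l^p[l^q]` cost of a bijection between two persistence diagrams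
(only the geometric component of each point is used). -/
def cost (p q : ℝ≥0∞) {X Y : Diagram} (φ : X.pts ≃ Y.pts) : ℝ≥0∞ :=
  if p = ∞ then
    ⨆ x : X.pts, ENNReal.ofReal (qnorm q ((x : (ℝ × ℝ) × ℕ).1 - ((φ x : (ℝ × ℝ) × ℕ)).1))
  else
    (∑' x : X.pts,
      ENNReal.ofReal (qnorm q ((x : (ℝ × ℝ) × ℕ).1 - ((φ x : (ℝ × ℝ) × ℕ)).1)) ^ p.toReal)
      ^ (1 / p.toReal)

/-- The `l^p[l^q]` matching distance `d_p[l^q]` between persistence diagrams. -/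
def pdist (p q : ℝ≥0∞) (X Y : Diagram) : ℝ≥0∞ :=
  ⨅ φ : X.pts ≃ Y.pts, cost p q φ

/-- The time-`t` slice of the convex-combination curve induced by a bijection `φ`:
each point `x` moves along the straight line to `φ x`, keeping its index. -/
def convComb {X Y : Diagram} (φ : X.pts ≃ Y.pts) (t : ℝ) : Set ((ℝ × ℝ) × ℕ) :=
  (fun x : X.pts =>
    ((1 - t) • (x : (ℝ × ℝ) × ℕ).1 + t • ((φ x : (ℝ × ℝ) × ℕ)).1,
     (x : (ℝ × ℝ) × ℕ).2)) '' Set.univ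

end
section AuxLemmas

open scoped ENNReal

variable {q : ℝ≥0∞}

noncomputable def Cq (q : ℝ≥0∞) : ℝ := if q = ∞ then 1 else 2 ^ (1 / q.toReal)

lemma Cq_pos (q : ℝ≥0∞) : 0 < Cq q := by
  unfold Cq
  split
  · norm_num
  · exact Real.rpow_pos_of_pos two_pos _

lemma one_le_toReal (hq : 1 ≤ q) (h : q ≠ ∞) : 1 ≤ q.toReal := by
  simpa using ENNReal.toReal_mono h hq

lemma qnorm_anti (hq : 1 ≤ q) (a : ℝ) : qnorm q (a, -a) = Cq q * |a| := by
  unfold qnorm Cq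
  by_cases h : q = ∞
  · simp [h, abs_neg]
  · have hr : 1 ≤ q.toReal := one_le_toReal hq h
    have hr0 : q.toReal ≠ 0 := by linarith
    simp only [if_neg h, abs_neg]
    rw [← two_mul, Real.mul_rpow (by norm_num) (Real.rpow_nonneg (abs_nonneg a) _),
      ← Real.rpow_mul (abs_nonneg a), mul_one_div_cancel hr0, Real.rpow_one]

lemma qnorm_zero (hq : 1 ≤ q) : qnorm q 0 = 0 := by
  have h := qnorm_anti hq 0
  exact (by simpa using h : qnorm q (0, 0) = 0)

lemma qnorm_neg (q : ℝ≥0∞) (v : ℝ × ℝ) : qnorm q (-v) = qnorm q v := by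
  unfold qnorm
  simp [abs_neg]

lemma qnorm_ge (hq : 1 ≤ q) (v : ℝ × ℝ) :
    Cq q * ((|v.1| + |v.2|) / 2) ≤ qnorm q v := by
  unfold qnorm Cq
  by_cases h : q = ∞
  · simp only [if_pos h, one_mul]
    have h1 := le_max_left |v.1| |v.2|
    have h2 := le_max_right |v.1| |v.2|
    linarith
  · have hr : 1 ≤ q.toReal := one_le_toReal hq h
    have hr0 : 0 < q.toReal := by linarith
    set r := q.toReal with hrdef
    have h1 : ((1/2 : ℝ) * |v.1| + (1/2 : ℝ) * |v.2|) ^ r ≤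
        (1/2 : ℝ) * |v.1| ^ r + (1/2 : ℝ) * |v.2| ^ r := by
      have := Real.rpow_arith_mean_le_arith_mean_rpow (Finset.univ : Finset (Fin 2))
        ![1/2, 1/2] ![|v.1|, |v.2|] (by intro i _; fin_cases i <;> norm_num)
        (by simp [Fin.sum_univ_two]; norm_num) (by intro i _; fin_cases i <;> simp [abs_nonneg]) hr
      simpa [Fin.sum_univ_two] using this
    have hA : (0:ℝ) ≤ (|v.1| + |v.2|) / 2 := by positivity
    have h2 : 2 * ((|v.1| + |v.2|) / 2) ^ r ≤ |v.1| ^ r + |v.2| ^ r := by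
      have e : (|v.1| + |v.2|) / 2 = (1/2 : ℝ) * |v.1| + (1/2 : ℝ) * |v.2| := by ring
      rw [e]; linarith
    have h3 : (2 * ((|v.1| + |v.2|) / 2) ^ r) ^ (1/r) ≤ (|v.1| ^ r + |v.2| ^ r) ^ (1/r) :=
      Real.rpow_le_rpow (by positivity) h2 (by positivity)
    have h4 : (2 * ((|v.1| + |v.2|) / 2) ^ r) ^ (1/r) = 2 ^ (1/r) * ((|v.1| + |v.2|) / 2) := by
      rw [Real.mul_rpow (by norm_num) (Real.rpow_nonneg hA _), ← Real.rpow_mul hA,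
        mul_one_div_cancel (ne_of_gt hr0), Real.rpow_one]
    simp only [if_neg h]
    rw [← h4]
    exact h3

lemma cost_top {X Y : Diagram} (φ : X.pts ≃ Y.pts) :
    cost ∞ q φ = ⨆ x : X.pts,
      ENNReal.ofReal (qnorm q ((x : (ℝ × ℝ) × ℕ).1 - ((φ x : (ℝ × ℝ) × ℕ)).1)) := by
  unfold cost
  rw [if_pos rfl]

lemma pdist_le_of_bound {X Y : Diagram} (φ : X.pts ≃ Y.pts) {B : ℝ}
    (hB : ∀ x : X.pts, qnorm q ((x : (ℝ × ℝ) × ℕ).1 - ((φ x : (ℝ × ℝ) × ℕ)).1) ≤ B) :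
    pdist ∞ q X Y ≤ ENNReal.ofReal B := by
  refine le_trans (iInf_le _ φ) ?_
  rw [cost_top]
  exact iSup_le fun x => ENNReal.ofReal_le_ofReal (hB x)

lemma le_pdist_of_bound {X Y : Diagram} {B : ℝ} (x₀ : X.pts)
    (hB : ∀ φ : X.pts ≃ Y.pts,
      B ≤ qnorm q ((x₀ : (ℝ × ℝ) × ℕ).1 - ((φ x₀ : (ℝ × ℝ) × ℕ)).1)) :
    ENNReal.ofReal B ≤ pdist ∞ q X Y := by
  refine le_iInf fun φ => ?_
  rw [cost_top]
  exact le_trans (ENNReal.ofReal_le_ofReal (hB φ))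
    (le_iSup (fun x : X.pts => ENNReal.ofReal
      (qnorm q ((x : (ℝ × ℝ) × ℕ).1 - ((φ x : (ℝ × ℝ) × ℕ)).1))) x₀)

lemma cost_symm {X Y : Diagram} (ψ : Y.pts ≃ X.pts) : cost ∞ q ψ.symm = cost ∞ q ψ := by
  rw [cost_top, cost_top, ← Equiv.iSup_comp (e := ψ)
    (g := fun x : X.pts => ENNReal.ofReal
      (qnorm q ((x : (ℝ × ℝ) × ℕ).1 - ((ψ.symm x : (ℝ × ℝ) × ℕ)).1)))]
  refine iSup_congr fun y => ?_
  rw [Equiv.symm_apply_apply, ← neg_sub, qnorm_neg]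

lemma pdist_symm (q : ℝ≥0∞) (X Y : Diagram) : pdist ∞ q X Y = pdist ∞ q Y X := by
  have key : ∀ X Y : Diagram, pdist ∞ q X Y ≤ pdist ∞ q Y X := by
    intro X Y
    refine le_iInf fun ψ => ?_
    exact iInf_le_of_le ψ.symm (le_of_eq (cost_symm ψ))
  exact le_antisymm (key X Y) (key Y X)

lemma pdist_zero_of_eq {X Y : Diagram} (hq : 1 ≤ q) (h : X.pts = Y.pts) :
    pdist ∞ q X Y = 0 := by
  have hb := pdist_le_of_bound (q := q) (Equiv.setCongr h) (B := 0) (fun x => by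
    rw [Equiv.setCongr_apply, sub_self, qnorm_zero hq])
  simpa using le_antisymm (by simpa using hb) (zero_le ..)

lemma bijOn_equiv_apply {α β : Type*} {s : Set α} {t : Set β} (f : α → β)
    (h : Set.BijOn f s t) (x : s) : (h.equiv f x : β) = f x := rfl

end AuxLemmas
section Scenarios

open scoped ENNReal

/-- forward map for two moving points -/
noncomputable def mvI (a b c d : (ℝ × ℝ) × ℕ) (x : (ℝ × ℝ) × ℕ) : (ℝ × ℝ) × ℕ :=
  if x = a then b else if x = c then d else x

lemma diag_mem' {x : (ℝ × ℝ) × ℕ} (h : x ∈ diagSet) : x.1.1 = x.1.2 := h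

lemma bijOn_I {k m s t : ℝ} (hk : 0 < k) (hm : 0 < m)
    (hs0 : 0 ≤ s) (hst : s < t) (ht : t < 1/3) :
    Set.BijOn (mvI ((k/2*s, k/2*(2-s)), 0) ((k/2*t, k/2*(2-t)), 0)
        ((m/2*(3*s), m/2*(2-3*s)), 1) ((m/2*(3*t), m/2*(2-3*t)), 1))
      (insert ((k/2*s, k/2*(2-s)), 0) (insert ((m/2*(3*s), m/2*(2-3*s)), 1) diagSet))
      (insert ((k/2*t, k/2*(2-t)), 0) (insert ((m/2*(3*t), m/2*(2-3*t)), 1) diagSet)) := by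
  have ht0 : 0 ≤ t := le_trans hs0 (le_of_lt hst)
  have hKso : k/2*s < k/2*(2-s) := by nlinarith
  have hKto : k/2*t < k/2*(2-t) := by nlinarith
  have hMso : m/2*(3*s) < m/2*(2-3*s) := by nlinarith
  have hMto : m/2*(3*t) < m/2*(2-3*t) := by nlinarith
  have hKst : (((k/2*s, k/2*(2-s)), 0) : (ℝ × ℝ) × ℕ) ≠ ((k/2*t, k/2*(2-t)), 0) := by
    have h : k/2*s < k/2*t := by nlinarith
    simp only [ne_eq, Prod.mk.injEq]
    rintro ⟨⟨h1, -⟩, -⟩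
    exact absurd h1 (ne_of_lt h)
  have hMst : (((m/2*(3*s), m/2*(2-3*s)), 1) : (ℝ × ℝ) × ℕ) ≠ ((m/2*(3*t), m/2*(2-3*t)), 1) := by
    have h : m/2*(3*s) < m/2*(3*t) := by nlinarith
    simp only [ne_eq, Prod.mk.injEq]
    rintro ⟨⟨h1, -⟩, -⟩
    exact absurd h1 (ne_of_lt h)
  have hMsKs : (((m/2*(3*s), m/2*(2-3*s)), 1) : (ℝ × ℝ) × ℕ) ≠ ((k/2*s, k/2*(2-s)), 0) := by
    simp [Prod.ext_iff]
  have hMtKt : (((m/2*(3*t), m/2*(2-3*t)), 1) : (ℝ × ℝ) × ℕ) ≠ ((k/2*t, k/2*(2-t)), 0) := by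
    simp [Prod.ext_iff]
  refine Set.InvOn.bijOn (f' := mvI ((k/2*t, k/2*(2-t)), 0) ((k/2*s, k/2*(2-s)), 0)
      ((m/2*(3*t), m/2*(2-3*t)), 1) ((m/2*(3*s), m/2*(2-3*s)), 1)) ⟨?_, ?_⟩ ?_ ?_
  · -- LeftInvOn
    intro x hx
    rcases Set.mem_insert_iff.mp hx with rfl | hx'
    · simp [mvI]
    rcases Set.mem_insert_iff.mp hx' with rfl | hxd
    · simp [mvI, hMsKs, hMtKt]
    · have hd := diag_mem' hxd
      have h1 : x ≠ ((k/2*s, k/2*(2-s)), 0) := by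
        rintro rfl; exact absurd hd (ne_of_lt hKso)
      have h2 : x ≠ ((m/2*(3*s), m/2*(2-3*s)), 1) := by
        rintro rfl; exact absurd hd (ne_of_lt hMso)
      have h3 : x ≠ ((k/2*t, k/2*(2-t)), 0) := by
        rintro rfl; exact absurd hd (ne_of_lt hKto)
      have h4 : x ≠ ((m/2*(3*t), m/2*(2-3*t)), 1) := by
        rintro rfl; exact absurd hd (ne_of_lt hMto)
      simp [mvI, h1, h2, h3, h4]
  · -- RightInvOn
    intro y hy
    rcases Set.mem_insert_iff.mp hy with rfl | hy'
    · simp [mvI]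
    rcases Set.mem_insert_iff.mp hy' with rfl | hyd
    · simp [mvI, hMsKs, hMtKt]
    · have hd := diag_mem' hyd
      have h1 : y ≠ ((k/2*s, k/2*(2-s)), 0) := by
        rintro rfl; exact absurd hd (ne_of_lt hKso)
      have h2 : y ≠ ((m/2*(3*s), m/2*(2-3*s)), 1) := by
        rintro rfl; exact absurd hd (ne_of_lt hMso)
      have h3 : y ≠ ((k/2*t, k/2*(2-t)), 0) := by
        rintro rfl; exact absurd hd (ne_of_lt hKto)
      have h4 : y ≠ ((m/2*(3*t), m/2*(2-3*t)), 1) := by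
        rintro rfl; exact absurd hd (ne_of_lt hMto)
      simp [mvI, h1, h2, h3, h4]
  · -- MapsTo forward
    intro x hx
    rcases Set.mem_insert_iff.mp hx with rfl | hx'
    · simp only [mvI, if_pos rfl]
      exact Set.mem_insert _ _
    rcases Set.mem_insert_iff.mp hx' with rfl | hxd
    · simp only [mvI, if_neg hMsKs, if_pos rfl]
      exact Set.mem_insert_of_mem _ (Set.mem_insert _ _)
    · have hd := diag_mem' hxd
      have h1 : x ≠ ((k/2*s, k/2*(2-s)), 0) := by
        rintro rfl; exact absurd hd (ne_of_lt hKso)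
      have h2 : x ≠ ((m/2*(3*s), m/2*(2-3*s)), 1) := by
        rintro rfl; exact absurd hd (ne_of_lt hMso)
      simp only [mvI, if_neg h1, if_neg h2]
      exact Set.mem_insert_of_mem _ (Set.mem_insert_of_mem _ hxd)
  · -- MapsTo backward
    intro y hy
    rcases Set.mem_insert_iff.mp hy with rfl | hy'
    · simp only [mvI, if_pos rfl]
      exact Set.mem_insert _ _
    rcases Set.mem_insert_iff.mp hy' with rfl | hyd
    · simp only [mvI, if_neg hMtKt, if_pos rfl]
      exact Set.mem_insert_of_mem _ (Set.mem_insert _ _)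
    · have hd := diag_mem' hyd
      have h3 : y ≠ ((k/2*t, k/2*(2-t)), 0) := by
        rintro rfl; exact absurd hd (ne_of_lt hKto)
      have h4 : y ≠ ((m/2*(3*t), m/2*(2-3*t)), 1) := by
        rintro rfl; exact absurd hd (ne_of_lt hMto)
      simp only [mvI, if_neg h3, if_neg h4]
      exact Set.mem_insert_of_mem _ (Set.mem_insert_of_mem _ hyd)

end Scenarios
section Scenarios2

open scoped ENNReal

lemma ptne {p r : ℝ × ℝ} (h : p ≠ r) (i j : ℕ) : ((p, i) : (ℝ × ℝ) × ℕ) ≠ (r, j) :=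
  fun hh => h (congrArg Prod.fst hh)

lemma idxne (p r : ℝ × ℝ) {i j : ℕ} (h : i ≠ j) : ((p, i) : (ℝ × ℝ) × ℕ) ≠ (r, j) :=
  fun hh => h (congrArg Prod.snd hh)

noncomputable def fII (k m s t : ℝ) (x : (ℝ × ℝ) × ℕ) : (ℝ × ℝ) × ℕ :=
  if x = ((k/2*s, k/2*(2-s)), 0) then ((k/2*t, k/2*(2-t)), 0)
  else if x = ((m/2*(3*s), m/2*(2-3*s)), 1) then ((m/2, m/2), 1)
  else if x.1 = (k/2, k/2) ∧ t = 1 then ((k/2, k/2), x.2+1)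
  else if x.1 = (m/2, m/2) ∧ 1 ≤ x.2 then ((m/2, m/2), x.2+1)
  else x

noncomputable def gII (k m s t : ℝ) (y : (ℝ × ℝ) × ℕ) : (ℝ × ℝ) × ℕ :=
  if y = ((k/2*t, k/2*(2-t)), 0) then ((k/2*s, k/2*(2-s)), 0)
  else if y = ((m/2, m/2), 1) then ((m/2*(3*s), m/2*(2-3*s)), 1)
  else if y.1 = (k/2, k/2) ∧ t = 1 ∧ 1 ≤ y.2 then ((k/2, k/2), y.2-1)
  else if y.1 = (m/2, m/2) ∧ 2 ≤ y.2 then ((m/2, m/2), y.2-1)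
  else y

variable {k m s t : ℝ}

lemma fII_Ks : fII k m s t ((k/2*s, k/2*(2-s)), 0) = ((k/2*t, k/2*(2-t)), 0) := by
  unfold fII; rw [if_pos rfl]

lemma fII_Ms : fII k m s t ((m/2*(3*s), m/2*(2-3*s)), 1) = ((m/2, m/2), 1) := by
  unfold fII; rw [if_neg (idxne _ _ (by decide)), if_pos rfl]

lemma fII_pk (n : ℕ) (h1 : ((k/2, k/2) : ℝ × ℝ) ≠ (k/2*s, k/2*(2-s)))
    (h2 : ((k/2, k/2) : ℝ × ℝ) ≠ (m/2*(3*s), m/2*(2-3*s))) (ht : t = 1) :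
    fII k m s t ((k/2, k/2), n) = ((k/2, k/2), n+1) := by
  unfold fII; rw [if_neg (ptne h1 _ _), if_neg (ptne h2 _ _), if_pos ⟨rfl, ht⟩]

lemma fII_pm (n : ℕ) (h1 : ((m/2, m/2) : ℝ × ℝ) ≠ (k/2*s, k/2*(2-s)))
    (h2 : ((m/2, m/2) : ℝ × ℝ) ≠ (m/2*(3*s), m/2*(2-3*s)))
    (h3 : ((m/2, m/2) : ℝ × ℝ) ≠ (k/2, k/2)) (hn : 1 ≤ n) :
    fII k m s t ((m/2, m/2), n) = ((m/2, m/2), n+1) := by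
  unfold fII
  rw [if_neg (ptne h1 _ _), if_neg (ptne h2 _ _), if_neg (fun hc => h3 hc.1),
    if_pos ⟨rfl, hn⟩]

lemma fII_id (x : (ℝ × ℝ) × ℕ) (h1 : x ≠ ((k/2*s, k/2*(2-s)), 0))
    (h2 : x ≠ ((m/2*(3*s), m/2*(2-3*s)), 1))
    (h3 : ¬(x.1 = (k/2, k/2) ∧ t = 1)) (h4 : ¬(x.1 = (m/2, m/2) ∧ 1 ≤ x.2)) :
    fII k m s t x = x := by
  unfold fII; rw [if_neg h1, if_neg h2, if_neg h3, if_neg h4]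

lemma gII_Kt : gII k m s t ((k/2*t, k/2*(2-t)), 0) = ((k/2*s, k/2*(2-s)), 0) := by
  unfold gII; rw [if_pos rfl]

lemma gII_pm1 : gII k m s t ((m/2, m/2), 1) = ((m/2*(3*s), m/2*(2-3*s)), 1) := by
  unfold gII; rw [if_neg (idxne _ _ (by decide)), if_pos rfl]

lemma gII_pk (n : ℕ) (ht : t = 1) (hn : 1 ≤ n)
    (h2 : ((k/2, k/2) : ℝ × ℝ) ≠ (m/2, m/2)) :
    gII k m s t ((k/2, k/2), n) = ((k/2, k/2), n-1) := by
  unfold gII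
  rw [if_neg (idxne _ _ (by omega)), if_neg (ptne h2 _ _), if_pos ⟨rfl, ht, hn⟩]

lemma gII_pm (n : ℕ) (hn : 2 ≤ n) (h3 : ((m/2, m/2) : ℝ × ℝ) ≠ (k/2, k/2)) :
    gII k m s t ((m/2, m/2), n) = ((m/2, m/2), n-1) := by
  unfold gII
  rw [if_neg (idxne _ _ (by omega)), if_neg (idxne _ _ (by omega)),
    if_neg (fun hc => h3 hc.1), if_pos ⟨rfl, hn⟩]

lemma gII_id (y : (ℝ × ℝ) × ℕ) (h1 : y ≠ ((k/2*t, k/2*(2-t)), 0))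
    (h2 : y ≠ ((m/2, m/2), 1))
    (h3 : ¬(y.1 = (k/2, k/2) ∧ t = 1 ∧ 1 ≤ y.2))
    (h4 : ¬(y.1 = (m/2, m/2) ∧ 2 ≤ y.2)) :
    gII k m s t y = y := by
  unfold gII; rw [if_neg h1, if_neg h2, if_neg h3, if_neg h4]

lemma bijOn_II (hk : 0 < k) (hm : 0 < m) (hmk : 3*m < k)
    (hs0 : 0 ≤ s) (hs : s < 1/3) (ht : 1/3 ≤ t) (ht1 : t ≤ 1) :
    Set.BijOn (fII k m s t)
      (insert ((k/2*s, k/2*(2-s)), 0) (insert ((m/2*(3*s), m/2*(2-3*s)), 1) diagSet))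
      (insert ((k/2*t, k/2*(2-t)), 0) diagSet) := by
  have hkm : m < k := by linarith
  have hKso : k/2*s < k/2*(2-s) := by nlinarith
  have hMso : m/2*(3*s) < m/2*(2-3*s) := by nlinarith
  have nKs_pk : ((k/2, k/2) : ℝ × ℝ) ≠ (k/2*s, k/2*(2-s)) := by
    have h : k/2*s < k/2 := by nlinarith
    simp only [ne_eq, Prod.mk.injEq]
    rintro ⟨h1, -⟩; exact absurd h1.symm (ne_of_lt h)
  have nMs_pk : ((k/2, k/2) : ℝ × ℝ) ≠ (m/2*(3*s), m/2*(2-3*s)) := by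
    simp only [ne_eq, Prod.mk.injEq]
    rintro ⟨h1, h2⟩; nlinarith
  have nKs_pm : ((m/2, m/2) : ℝ × ℝ) ≠ (k/2*s, k/2*(2-s)) := by
    simp only [ne_eq, Prod.mk.injEq]
    rintro ⟨h1, h2⟩; nlinarith
  have nMs_pm : ((m/2, m/2) : ℝ × ℝ) ≠ (m/2*(3*s), m/2*(2-3*s)) := by
    simp only [ne_eq, Prod.mk.injEq]
    rintro ⟨h1, h2⟩; nlinarith
  have npkpm : ((k/2, k/2) : ℝ × ℝ) ≠ (m/2, m/2) := by
    simp only [ne_eq, Prod.mk.injEq]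
    rintro ⟨h1, -⟩; linarith
  have hdiag_t1 : (k/2*t = k/2*(2-t)) → t = 1 := by intro h; nlinarith
  have hKt1 : t = 1 → (((k/2*t, k/2*(2-t)), 0) : (ℝ × ℝ) × ℕ) = ((k/2, k/2), 0) := by
    rintro rfl; norm_num
  refine Set.InvOn.bijOn (f' := gII k m s t) ⟨?_, ?_⟩ ?_ ?_
  · -- LeftInvOn : ∀ x ∈ dom, g (f x) = x
    intro x hx
    rcases Set.mem_insert_iff.mp hx with rfl | hx'
    · rw [fII_Ks, gII_Kt]
    rcases Set.mem_insert_iff.mp hx' with rfl | hxd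
    · rw [fII_Ms, gII_pm1]
    obtain ⟨⟨x1, x2⟩, n⟩ := x
    obtain rfl : x1 = x2 := diag_mem' hxd
    have nxKs : (((x1, x1), n) : (ℝ × ℝ) × ℕ) ≠ ((k/2*s, k/2*(2-s)), 0) := by
      simp only [ne_eq, Prod.mk.injEq]
      rintro ⟨⟨rfl, h2⟩, -⟩; exact absurd h2 (ne_of_lt hKso)
    have nxMs : (((x1, x1), n) : (ℝ × ℝ) × ℕ) ≠ ((m/2*(3*s), m/2*(2-3*s)), 1) := by
      simp only [ne_eq, Prod.mk.injEq]
      rintro ⟨⟨rfl, h2⟩, -⟩; exact absurd h2 (ne_of_lt hMso)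
    by_cases hc3 : ((x1, x1) : ℝ × ℝ) = (k/2, k/2) ∧ t = 1
    · obtain ⟨h1, ht'⟩ := hc3
      rw [h1, fII_pk n nKs_pk nMs_pk ht', gII_pk (n+1) ht' (by omega) npkpm]
      simp
    · by_cases hc4 : ((x1, x1) : ℝ × ℝ) = (m/2, m/2) ∧ 1 ≤ n
      · obtain ⟨h1, hn⟩ := hc4
        rw [h1, fII_pm n nKs_pm nMs_pm npkpm.symm hn, gII_pm (n+1) (by omega) npkpm.symm]
        simp
      · have h3 : ¬((((x1, x1), n) : (ℝ × ℝ) × ℕ).1 = (k/2, k/2) ∧ t = 1) := hc3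
        have h4 : ¬((((x1, x1), n) : (ℝ × ℝ) × ℕ).1 = (m/2, m/2) ∧ 1 ≤ n) := hc4
        rw [fII_id _ nxKs nxMs h3 h4]
        have nxKt : (((x1, x1), n) : (ℝ × ℝ) × ℕ) ≠ ((k/2*t, k/2*(2-t)), 0) := by
          simp only [ne_eq, Prod.mk.injEq]
          rintro ⟨⟨rfl, h2⟩, rfl⟩
          have ht' := hdiag_t1 h2
          apply hc3
          refine ⟨?_, ht'⟩
          subst ht'
          norm_num
        have nxpm1 : (((x1, x1), n) : (ℝ × ℝ) × ℕ) ≠ ((m/2, m/2), 1) := by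
          simp only [ne_eq, Prod.mk.injEq]
          rintro ⟨⟨h1a, h1b⟩, rfl⟩
          exact hc4 ⟨Prod.ext h1a h1b, le_refl 1⟩
        exact gII_id _ nxKt nxpm1 (fun h => hc3 ⟨h.1, h.2.1⟩) (fun h => hc4 ⟨h.1, by omega⟩)
  · -- RightInvOn : ∀ y ∈ cod, f (g y) = y
    intro y hy
    rcases Set.mem_insert_iff.mp hy with rfl | hyd
    · rw [gII_Kt, fII_Ks]
    by_cases hyKt : y = (((k/2*t, k/2*(2-t)), 0) : (ℝ × ℝ) × ℕ)
    · rw [hyKt, gII_Kt, fII_Ks]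
    by_cases hy2 : y = (((m/2, m/2), 1) : (ℝ × ℝ) × ℕ)
    · rw [hy2, gII_pm1, fII_Ms]
    obtain ⟨⟨y1, y2⟩, n⟩ := y
    obtain rfl : y1 = y2 := diag_mem' hyd
    by_cases hc3 : ((y1, y1) : ℝ × ℝ) = (k/2, k/2) ∧ t = 1 ∧ 1 ≤ n
    · obtain ⟨h1, ht', hn⟩ := hc3
      rw [h1, gII_pk n ht' hn npkpm, fII_pk (n-1) nKs_pk nMs_pk ht']
      simp [Nat.sub_add_cancel hn]
    · by_cases hc4 : ((y1, y1) : ℝ × ℝ) = (m/2, m/2) ∧ 2 ≤ n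
      · obtain ⟨h1, hn⟩ := hc4
        rw [h1, gII_pm n hn npkpm.symm, fII_pm (n-1) nKs_pm nMs_pm npkpm.symm (by omega)]
        simp [Nat.sub_add_cancel (by omega : 1 ≤ n)]
      · have hg3 : ¬((((y1, y1), n) : (ℝ × ℝ) × ℕ).1 = (k/2, k/2) ∧ t = 1 ∧
            1 ≤ (((y1, y1), n) : (ℝ × ℝ) × ℕ).2) := hc3
        have hg4 : ¬((((y1, y1), n) : (ℝ × ℝ) × ℕ).1 = (m/2, m/2) ∧
            2 ≤ (((y1, y1), n) : (ℝ × ℝ) × ℕ).2) := hc4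
        rw [gII_id _ hyKt hy2 hg3 hg4]
        have nyKs : (((y1, y1), n) : (ℝ × ℝ) × ℕ) ≠ ((k/2*s, k/2*(2-s)), 0) := by
          simp only [ne_eq, Prod.mk.injEq]
          rintro ⟨⟨rfl, h2⟩, -⟩; exact absurd h2 (ne_of_lt hKso)
        have nyMs : (((y1, y1), n) : (ℝ × ℝ) × ℕ) ≠ ((m/2*(3*s), m/2*(2-3*s)), 1) := by
          simp only [ne_eq, Prod.mk.injEq]
          rintro ⟨⟨rfl, h2⟩, -⟩; exact absurd h2 (ne_of_lt hMso)
        refine fII_id _ nyKs nyMs ?_ ?_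
        · rintro ⟨h1, ht'⟩
          rcases Nat.eq_zero_or_pos n with rfl | hn
          · exact hyKt (by rw [hKt1 ht']; exact Prod.ext h1 rfl)
          · exact hc3 ⟨h1, ht', hn⟩
        · rintro ⟨h1, hn⟩
          rcases eq_or_lt_of_le hn with h | h
          · exact hy2 (Prod.ext h1 h.symm)
          · exact hc4 ⟨h1, by omega⟩
  · -- MapsTo forward
    intro x hx
    rcases Set.mem_insert_iff.mp hx with rfl | hx'
    · rw [fII_Ks]; exact Set.mem_insert _ _
    rcases Set.mem_insert_iff.mp hx' with rfl | hxd
    · rw [fII_Ms]; exact Set.mem_insert_of_mem _ rfl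
    obtain ⟨⟨x1, x2⟩, n⟩ := x
    obtain rfl : x1 = x2 := diag_mem' hxd
    have nxKs : (((x1, x1), n) : (ℝ × ℝ) × ℕ) ≠ ((k/2*s, k/2*(2-s)), 0) := by
      simp only [ne_eq, Prod.mk.injEq]
      rintro ⟨⟨rfl, h2⟩, -⟩; exact absurd h2 (ne_of_lt hKso)
    have nxMs : (((x1, x1), n) : (ℝ × ℝ) × ℕ) ≠ ((m/2*(3*s), m/2*(2-3*s)), 1) := by
      simp only [ne_eq, Prod.mk.injEq]
      rintro ⟨⟨rfl, h2⟩, -⟩; exact absurd h2 (ne_of_lt hMso)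
    by_cases hc3 : ((x1, x1) : ℝ × ℝ) = (k/2, k/2) ∧ t = 1
    · rw [hc3.1, fII_pk n nKs_pk nMs_pk hc3.2]
      exact Set.mem_insert_of_mem _ rfl
    · by_cases hc4 : ((x1, x1) : ℝ × ℝ) = (m/2, m/2) ∧ 1 ≤ n
      · rw [hc4.1, fII_pm n nKs_pm nMs_pm npkpm.symm hc4.2]
        exact Set.mem_insert_of_mem _ rfl
      · rw [fII_id _ nxKs nxMs hc3 hc4]
        exact Set.mem_insert_of_mem _ hxd
  · -- MapsTo backward
    intro y hy
    rcases Set.mem_insert_iff.mp hy with rfl | hyd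
    · rw [gII_Kt]; exact Set.mem_insert _ _
    by_cases hyKt : y = (((k/2*t, k/2*(2-t)), 0) : (ℝ × ℝ) × ℕ)
    · rw [hyKt, gII_Kt]; exact Set.mem_insert _ _
    by_cases hy2 : y = (((m/2, m/2), 1) : (ℝ × ℝ) × ℕ)
    · rw [hy2, gII_pm1]
      exact Set.mem_insert_of_mem _ (Set.mem_insert _ _)
    obtain ⟨⟨y1, y2⟩, n⟩ := y
    obtain rfl : y1 = y2 := diag_mem' hyd
    by_cases hc3 : ((y1, y1) : ℝ × ℝ) = (k/2, k/2) ∧ t = 1 ∧ 1 ≤ n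
    · rw [hc3.1, gII_pk n hc3.2.1 hc3.2.2 npkpm]
      exact Set.mem_insert_of_mem _ (Set.mem_insert_of_mem _ rfl)
    · by_cases hc4 : ((y1, y1) : ℝ × ℝ) = (m/2, m/2) ∧ 2 ≤ n
      · rw [hc4.1, gII_pm n hc4.2 npkpm.symm]
        exact Set.mem_insert_of_mem _ (Set.mem_insert_of_mem _ rfl)
      · rw [gII_id _ hyKt hy2 hc3 hc4]
        exact Set.mem_insert_of_mem _ (Set.mem_insert_of_mem _ hyd)

end Scenarios2
section Scenarios3

open scoped ENNReal

noncomputable def fIII (k s t : ℝ) (x : (ℝ × ℝ) × ℕ) : (ℝ × ℝ) × ℕ :=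
  if x = ((k/2*s, k/2*(2-s)), 0) then ((k/2*t, k/2*(2-t)), 0)
  else if x.1 = (k/2, k/2) ∧ t = 1 then ((k/2, k/2), x.2+1)
  else x

noncomputable def gIII (k s t : ℝ) (y : (ℝ × ℝ) × ℕ) : (ℝ × ℝ) × ℕ :=
  if y = ((k/2*t, k/2*(2-t)), 0) then ((k/2*s, k/2*(2-s)), 0)
  else if y.1 = (k/2, k/2) ∧ t = 1 ∧ 1 ≤ y.2 then ((k/2, k/2), y.2-1)
  else y

variable {k s t : ℝ}

lemma fIII_Ks : fIII k s t ((k/2*s, k/2*(2-s)), 0) = ((k/2*t, k/2*(2-t)), 0) := by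
  unfold fIII; rw [if_pos rfl]

lemma fIII_pk (n : ℕ) (h1 : ((k/2, k/2) : ℝ × ℝ) ≠ (k/2*s, k/2*(2-s))) (ht : t = 1) :
    fIII k s t ((k/2, k/2), n) = ((k/2, k/2), n+1) := by
  unfold fIII; rw [if_neg (ptne h1 _ _), if_pos ⟨rfl, ht⟩]

lemma fIII_id (x : (ℝ × ℝ) × ℕ) (h1 : x ≠ ((k/2*s, k/2*(2-s)), 0))
    (h2 : ¬(x.1 = (k/2, k/2) ∧ t = 1)) : fIII k s t x = x := by
  unfold fIII; rw [if_neg h1, if_neg h2]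

lemma gIII_Kt : gIII k s t ((k/2*t, k/2*(2-t)), 0) = ((k/2*s, k/2*(2-s)), 0) := by
  unfold gIII; rw [if_pos rfl]

lemma gIII_pk (n : ℕ) (ht : t = 1) (hn : 1 ≤ n) :
    gIII k s t ((k/2, k/2), n) = ((k/2, k/2), n-1) := by
  unfold gIII; rw [if_neg (idxne _ _ (by omega)), if_pos ⟨rfl, ht, hn⟩]

lemma gIII_id (y : (ℝ × ℝ) × ℕ) (h1 : y ≠ ((k/2*t, k/2*(2-t)), 0))
    (h2 : ¬(y.1 = (k/2, k/2) ∧ t = 1 ∧ 1 ≤ y.2)) : gIII k s t y = y := by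
  unfold gIII; rw [if_neg h1, if_neg h2]

lemma bijOn_III (hk : 0 < k) (hst : s < t) (ht1 : t ≤ 1) :
    Set.BijOn (fIII k s t)
      (insert ((k/2*s, k/2*(2-s)), 0) diagSet)
      (insert ((k/2*t, k/2*(2-t)), 0) diagSet) := by
  have hs1 : s < 1 := lt_of_lt_of_le hst ht1
  have hKso : k/2*s < k/2*(2-s) := by nlinarith
  have nKs_pk : ((k/2, k/2) : ℝ × ℝ) ≠ (k/2*s, k/2*(2-s)) := by
    have h : k/2*s < k/2 := by nlinarith
    simp only [ne_eq, Prod.mk.injEq]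
    rintro ⟨h1, -⟩; exact absurd h1.symm (ne_of_lt h)
  have hdiag_t1 : (k/2*t = k/2*(2-t)) → t = 1 := by intro h; nlinarith
  have hKt1 : t = 1 → (((k/2*t, k/2*(2-t)), 0) : (ℝ × ℝ) × ℕ) = ((k/2, k/2), 0) := by
    rintro rfl; norm_num
  refine Set.InvOn.bijOn (f' := gIII k s t) ⟨?_, ?_⟩ ?_ ?_
  · -- LeftInvOn
    intro x hx
    rcases Set.mem_insert_iff.mp hx with rfl | hxd
    · rw [fIII_Ks, gIII_Kt]
    obtain ⟨⟨x1, x2⟩, n⟩ := x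
    obtain rfl : x1 = x2 := diag_mem' hxd
    have nxKs : (((x1, x1), n) : (ℝ × ℝ) × ℕ) ≠ ((k/2*s, k/2*(2-s)), 0) := by
      simp only [ne_eq, Prod.mk.injEq]
      rintro ⟨⟨rfl, h2⟩, -⟩; exact absurd h2 (ne_of_lt hKso)
    by_cases hc : ((x1, x1) : ℝ × ℝ) = (k/2, k/2) ∧ t = 1
    · rw [hc.1, fIII_pk n nKs_pk hc.2, gIII_pk (n+1) hc.2 (by omega)]
      simp
    · rw [fIII_id _ nxKs hc]
      have nxKt : (((x1, x1), n) : (ℝ × ℝ) × ℕ) ≠ ((k/2*t, k/2*(2-t)), 0) := by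
        simp only [ne_eq, Prod.mk.injEq]
        rintro ⟨⟨rfl, h2⟩, rfl⟩
        have ht' := hdiag_t1 h2
        apply hc
        refine ⟨?_, ht'⟩
        subst ht'
        norm_num
      exact gIII_id _ nxKt (fun h => hc ⟨h.1, h.2.1⟩)
  · -- RightInvOn
    intro y hy
    rcases Set.mem_insert_iff.mp hy with rfl | hyd
    · rw [gIII_Kt, fIII_Ks]
    by_cases hyKt : y = (((k/2*t, k/2*(2-t)), 0) : (ℝ × ℝ) × ℕ)
    · rw [hyKt, gIII_Kt, fIII_Ks]
    obtain ⟨⟨y1, y2⟩, n⟩ := y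
    obtain rfl : y1 = y2 := diag_mem' hyd
    by_cases hc : ((y1, y1) : ℝ × ℝ) = (k/2, k/2) ∧ t = 1 ∧ 1 ≤ n
    · obtain ⟨h1, ht', hn⟩ := hc
      rw [h1, gIII_pk n ht' hn, fIII_pk (n-1) nKs_pk ht']
      simp [Nat.sub_add_cancel hn]
    · rw [gIII_id _ hyKt hc]
      have nyKs : (((y1, y1), n) : (ℝ × ℝ) × ℕ) ≠ ((k/2*s, k/2*(2-s)), 0) := by
        simp only [ne_eq, Prod.mk.injEq]
        rintro ⟨⟨rfl, h2⟩, -⟩; exact absurd h2 (ne_of_lt hKso)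
      refine fIII_id _ nyKs ?_
      rintro ⟨h1, ht'⟩
      rcases Nat.eq_zero_or_pos n with rfl | hn
      · exact hyKt (by rw [hKt1 ht']; exact Prod.ext h1 rfl)
      · exact hc ⟨h1, ht', hn⟩
  · -- MapsTo forward
    intro x hx
    rcases Set.mem_insert_iff.mp hx with rfl | hxd
    · rw [fIII_Ks]; exact Set.mem_insert _ _
    obtain ⟨⟨x1, x2⟩, n⟩ := x
    obtain rfl : x1 = x2 := diag_mem' hxd
    have nxKs : (((x1, x1), n) : (ℝ × ℝ) × ℕ) ≠ ((k/2*s, k/2*(2-s)), 0) := by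
      simp only [ne_eq, Prod.mk.injEq]
      rintro ⟨⟨rfl, h2⟩, -⟩; exact absurd h2 (ne_of_lt hKso)
    by_cases hc : ((x1, x1) : ℝ × ℝ) = (k/2, k/2) ∧ t = 1
    · rw [hc.1, fIII_pk n nKs_pk hc.2]
      exact Set.mem_insert_of_mem _ rfl
    · rw [fIII_id _ nxKs hc]
      exact Set.mem_insert_of_mem _ hxd
  · -- MapsTo backward
    intro y hy
    rcases Set.mem_insert_iff.mp hy with rfl | hyd
    · rw [gIII_Kt]; exact Set.mem_insert _ _
    by_cases hyKt : y = (((k/2*t, k/2*(2-t)), 0) : (ℝ × ℝ) × ℕ)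
    · rw [hyKt, gIII_Kt]; exact Set.mem_insert _ _
    obtain ⟨⟨y1, y2⟩, n⟩ := y
    obtain rfl : y1 = y2 := diag_mem' hyd
    by_cases hc : ((y1, y1) : ℝ × ℝ) = (k/2, k/2) ∧ t = 1 ∧ 1 ≤ n
    · rw [hc.1, gIII_pk n hc.2.1 hc.2.2]
      exact Set.mem_insert_of_mem _ rfl
    · rw [gIII_id _ hyKt hc]
      exact Set.mem_insert_of_mem _ hyd

end Scenarios3
section MainDist

open scoped ENNReal

lemma mvI_a (a b c d : (ℝ × ℝ) × ℕ) : mvI a b c d a = b := by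
  unfold mvI; rw [if_pos rfl]

lemma mvI_c {a c : (ℝ × ℝ) × ℕ} (b d : (ℝ × ℝ) × ℕ) (h : c ≠ a) : mvI a b c d c = d := by
  unfold mvI; rw [if_neg h, if_pos rfl]

lemma mvI_id {a c x : (ℝ × ℝ) × ℕ} (b d : (ℝ × ℝ) × ℕ) (h1 : x ≠ a) (h2 : x ≠ c) :
    mvI a b c d x = x := by
  unfold mvI; rw [if_neg h1, if_neg h2]

lemma diff_anti (a b c d : ℝ) (h : a + b = c + d) :
    ((a, b) : ℝ × ℝ) - (c, d) = (a - c, -(a - c)) := by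
  rw [Prod.mk_sub_mk]
  exact Prod.ext rfl (by dsimp only; linarith)

lemma qnorm_pair_le {q : ℝ≥0∞} (hq : 1 ≤ q) {a b c d B : ℝ} (hsum : a + b = c + d)
    (hB : |a - c| ≤ B) : qnorm q (((a, b) : ℝ × ℝ) - (c, d)) ≤ Cq q * B := by
  rw [diff_anti a b c d hsum, qnorm_anti hq]
  exact mul_le_mul_of_nonneg_left hB (Cq_pos q).le

set_option maxHeartbeats 2000000 in
lemma main_dist (q : ℝ≥0∞) (hq : 1 ≤ q) {k m : ℝ} (hm : 0 < m) (hmk : 3 * m < k)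
    (ρ : ℝ → Diagram)
    (h1 : ∀ u ∈ Set.Icc (0:ℝ) (1/3), (ρ u).pts =
      insert ((k / 2 * u, k / 2 * (2 - u)), 0)
        (insert ((m / 2 * (3 * u), m / 2 * (2 - 3 * u)), 1) diagSet))
    (h2 : ∀ u ∈ Set.Icc (1/3:ℝ) 1, (ρ u).pts =
      insert ((k / 2 * u, k / 2 * (2 - u)), 0) diagSet)
    {s t : ℝ} (hs0 : 0 ≤ s) (ht1 : t ≤ 1) (hst : s ≤ t) :
    pdist ∞ q (ρ s) (ρ t) = ENNReal.ofReal (Cq q * (k/2*(t-s))) := by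
  have hk : 0 < k := by linarith
  have ht0 : 0 ≤ t := le_trans hs0 hst
  have hs1 : s ≤ 1 := le_trans hst ht1
  rcases eq_or_lt_of_le hst with rfl | hlt
  · rw [sub_self, mul_zero, mul_zero, ENNReal.ofReal_zero]
    refine le_antisymm ?_ (zero_le ..)
    have hb := pdist_le_of_bound (q := q) (Equiv.refl (ρ s).pts) (B := 0)
      (fun x => by rw [Equiv.refl_apply, sub_self, qnorm_zero hq])
    simpa using hb
  -- lower bound
  have hKs_mem : ((k/2*s, k/2*(2-s)), 0) ∈ (ρ s).pts := by
    by_cases h : s ≤ 1/3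
    · rw [h1 s ⟨hs0, h⟩]; exact Set.mem_insert _ _
    · rw [h2 s ⟨le_of_not_ge h, hs1⟩]; exact Set.mem_insert _ _
  have lower : ENNReal.ofReal (Cq q * (k/2*(t-s))) ≤ pdist ∞ q (ρ s) (ρ t) := by
    refine le_pdist_of_bound ⟨_, hKs_mem⟩ (fun φ => ?_)
    have hy := (φ ⟨_, hKs_mem⟩).2
    set yv : (ℝ × ℝ) × ℕ := ((φ ⟨_, hKs_mem⟩ : (ρ t).pts) : (ℝ × ℝ) × ℕ) with hyv
    clear_value yv
    refine le_trans ?_ (qnorm_ge hq _)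
    refine mul_le_mul_of_nonneg_left ?_ (Cq_pos q).le
    simp only [Prod.fst_sub, Prod.snd_sub]
    by_cases hc : t ≤ 1/3
    · rw [h1 t ⟨ht0, hc⟩] at hy
      rcases Set.mem_insert_iff.mp hy with heq | hy'
      · rw [heq]
        dsimp only
        nlinarith [neg_abs_le (k/2*s - k/2*t), le_abs_self (k/2*(2-s) - k/2*(2-t))]
      rcases Set.mem_insert_iff.mp hy' with heq | hyd
      · rw [heq]
        dsimp only
        nlinarith [abs_nonneg (k/2*s - m/2*(3*t)),
          le_abs_self (k/2*(2-s) - m/2*(2-3*t))]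
      · have hd := diag_mem' hyd
        nlinarith [neg_abs_le (k/2*s - yv.1.1), le_abs_self (k/2*(2-s) - yv.1.2),
          hd, mul_nonneg hk.le (sub_nonneg.mpr ht1)]
    · rw [h2 t ⟨le_of_not_ge hc, ht1⟩] at hy
      rcases Set.mem_insert_iff.mp hy with heq | hyd
      · rw [heq]
        dsimp only
        nlinarith [neg_abs_le (k/2*s - k/2*t), le_abs_self (k/2*(2-s) - k/2*(2-t))]
      · have hd := diag_mem' hyd
        nlinarith [neg_abs_le (k/2*s - yv.1.1), le_abs_self (k/2*(2-s) - yv.1.2),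
          hd, mul_nonneg hk.le (sub_nonneg.mpr ht1)]
  -- upper bound
  have hB0 : 0 ≤ k/2*(t-s) := by nlinarith
  have upper : pdist ∞ q (ρ s) (ρ t) ≤ ENNReal.ofReal (Cq q * (k/2*(t-s))) := by
    by_cases hcA : t < 1/3
    · -- scenario I
      have hsA : s < 1/3 := lt_trans hlt hcA
      have hds := h1 s ⟨hs0, le_of_lt hsA⟩
      have hdt := h1 t ⟨ht0, le_of_lt hcA⟩
      have hb := bijOn_I (k := k) (m := m) hk hm hs0 hlt hcA
      rw [← hds, ← hdt] at hb
      refine pdist_le_of_bound (hb.equiv _) (fun x => ?_)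
      rw [bijOn_equiv_apply]
      obtain ⟨xv, hxv⟩ := x
      have hx2 := hxv
      rw [hds] at hx2
      rcases Set.mem_insert_iff.mp hx2 with rfl | hx'
      · rw [mvI_a]
        exact qnorm_pair_le hq (by ring) (by rw [abs_le]; constructor <;> nlinarith)
      rcases Set.mem_insert_iff.mp hx' with rfl | hxd
      · rw [mvI_c _ _ (idxne _ _ (by decide))]
        exact qnorm_pair_le hq (by ring) (by rw [abs_le]; constructor <;> nlinarith)
      · have hd := diag_mem' hxd
        have hKso : k/2*s < k/2*(2-s) := by nlinarith
        have hMso : m/2*(3*s) < m/2*(2-3*s) := by nlinarith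
        have e1 : xv ≠ ((k/2*s, k/2*(2-s)), 0) := by
          rintro rfl; exact absurd hd (ne_of_lt hKso)
        have e2 : xv ≠ ((m/2*(3*s), m/2*(2-3*s)), 1) := by
          rintro rfl; exact absurd hd (ne_of_lt hMso)
        rw [mvI_id _ _ e1 e2, sub_self, qnorm_zero hq]
        exact mul_nonneg (Cq_pos q).le hB0
    · -- scenarios II and III
      have htB : 1/3 ≤ t := le_of_not_gt hcA
      by_cases hcB : s < 1/3
      · -- scenario II
        have hds := h1 s ⟨hs0, le_of_lt hcB⟩
        have hdt := h2 t ⟨htB, ht1⟩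
        have hb := bijOn_II (k := k) (m := m) hk hm hmk hs0 hcB htB ht1
        rw [← hds, ← hdt] at hb
        refine pdist_le_of_bound (hb.equiv _) (fun x => ?_)
        rw [bijOn_equiv_apply]
        obtain ⟨xv, hxv⟩ := x
        have hx2 := hxv
        rw [hds] at hx2
        rcases Set.mem_insert_iff.mp hx2 with rfl | hx'
        · rw [fII_Ks]
          exact qnorm_pair_le hq (by ring) (by rw [abs_le]; constructor <;> nlinarith)
        rcases Set.mem_insert_iff.mp hx' with rfl | hxd
        · rw [fII_Ms]
          exact qnorm_pair_le hq (by ring) (by rw [abs_le]; constructor <;> nlinarith)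
        · have hd := diag_mem' hxd
          have hKso : k/2*s < k/2*(2-s) := by nlinarith
          have hMso : m/2*(3*s) < m/2*(2-3*s) := by nlinarith
          have e1 : xv ≠ ((k/2*s, k/2*(2-s)), 0) := by
            rintro rfl; exact absurd hd (ne_of_lt hKso)
          have e2 : xv ≠ ((m/2*(3*s), m/2*(2-3*s)), 1) := by
            rintro rfl; exact absurd hd (ne_of_lt hMso)
          obtain ⟨⟨x1, x2⟩, n⟩ := xv
          obtain rfl : x1 = x2 := hd
          by_cases hc3 : ((x1, x1) : ℝ × ℝ) = (k/2, k/2) ∧ t = 1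
          · obtain ⟨hx1, ht'⟩ := hc3
            rw [Prod.mk.injEq] at hx1
            obtain ⟨rfl, -⟩ := hx1
            rw [fII_pk n (by
                have h : k/2*s < k/2 := by nlinarith
                simp only [ne_eq, Prod.mk.injEq]
                rintro ⟨hh, -⟩; exact absurd hh.symm (ne_of_lt h))
              (by
                simp only [ne_eq, Prod.mk.injEq]
                rintro ⟨hh1, hh2⟩; nlinarith) ht']
            rw [sub_self, qnorm_zero hq]
            exact mul_nonneg (Cq_pos q).le hB0
          · by_cases hc4 : ((x1, x1) : ℝ × ℝ) = (m/2, m/2) ∧ 1 ≤ n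
            · obtain ⟨hx1, hn'⟩ := hc4
              rw [Prod.mk.injEq] at hx1
              obtain ⟨rfl, -⟩ := hx1
              rw [fII_pm n (by
                  simp only [ne_eq, Prod.mk.injEq]
                  rintro ⟨hh1, hh2⟩; nlinarith)
                (by
                  have hMso' : m/2*(3*s) < m/2*(2-3*s) := by nlinarith
                  simp only [ne_eq, Prod.mk.injEq]
                  rintro ⟨hh1, hh2⟩; nlinarith)
                (by
                  simp only [ne_eq, Prod.mk.injEq]
                  rintro ⟨hh1, -⟩; nlinarith) hn']
              rw [sub_self, qnorm_zero hq]
              exact mul_nonneg (Cq_pos q).le hB0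
            · rw [fII_id _ e1 e2 hc3 hc4, sub_self, qnorm_zero hq]
              exact mul_nonneg (Cq_pos q).le hB0
      · -- scenario III
        have hsB : 1/3 ≤ s := le_of_not_gt hcB
        have hds := h2 s ⟨hsB, hs1⟩
        have hdt := h2 t ⟨htB, ht1⟩
        have hb := bijOn_III (k := k) hk hlt ht1
        rw [← hds, ← hdt] at hb
        refine pdist_le_of_bound (hb.equiv _) (fun x => ?_)
        rw [bijOn_equiv_apply]
        obtain ⟨xv, hxv⟩ := x
        have hx2 := hxv
        rw [hds] at hx2
        rcases Set.mem_insert_iff.mp hx2 with rfl | hxd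
        · rw [fIII_Ks]
          exact qnorm_pair_le hq (by ring) (by rw [abs_le]; constructor <;> nlinarith)
        · have hd := diag_mem' hxd
          have hKso : k/2*s < k/2*(2-s) := by nlinarith
          have e1 : xv ≠ ((k/2*s, k/2*(2-s)), 0) := by
            rintro rfl; exact absurd hd (ne_of_lt hKso)
          obtain ⟨⟨x1, x2⟩, n⟩ := xv
          obtain rfl : x1 = x2 := hd
          by_cases hc3 : ((x1, x1) : ℝ × ℝ) = (k/2, k/2) ∧ t = 1
          · obtain ⟨hx1, ht'⟩ := hc3
            rw [Prod.mk.injEq] at hx1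
            obtain ⟨rfl, -⟩ := hx1
            rw [fIII_pk n (by
                have h : k/2*s < k/2 := by nlinarith
                simp only [ne_eq, Prod.mk.injEq]
                rintro ⟨hh, -⟩; exact absurd hh.symm (ne_of_lt h)) ht']
            rw [sub_self, qnorm_zero hq]
            exact mul_nonneg (Cq_pos q).le hB0
          · rw [fIII_id _ e1 hc3, sub_self, qnorm_zero hq]
            exact mul_nonneg (Cq_pos q).le hB0
  exact le_antisymm upper lower

end MainDist

/-- Branching geodesics in `(D_∞[l^q], d_∞[l^q])`: for `0 < l < j`, `3j < k`, the curves
`μ` (from `Y = {(0,k),(0,j)}` to `∅`) and `ν` (from `Z = {(0,k),(0,l)}` to `∅`) defined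
in the statement are geodesics, agree on `[1/3,1]`, and differ on `[0,1/3)`. -/
theorem branching_geodesics_infty (q : ℝ≥0∞) (hq : 1 ≤ q)
    (l j k : ℝ) (hl : 0 < l) (hlj : l < j) (hjk : 3 * j < k)
    (μ ν : ℝ → Diagram)
    (hμ1 : ∀ t ∈ Set.Icc (0 : ℝ) (1 / 3), (μ t).pts =
      insert ((k / 2 * t, k / 2 * (2 - t)), 0)
        (insert ((j / 2 * (3 * t), j / 2 * (2 - 3 * t)), 1) diagSet))
    (hμ2 : ∀ t ∈ Set.Icc (1 / 3 : ℝ) 1, (μ t).pts =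
      insert ((k / 2 * t, k / 2 * (2 - t)), 0) diagSet)
    (hν1 : ∀ t ∈ Set.Icc (0 : ℝ) (1 / 3), (ν t).pts =
      insert ((k / 2 * t, k / 2 * (2 - t)), 0)
        (insert ((l / 2 * (3 * t), l / 2 * (2 - 3 * t)), 1) diagSet))
    (hν2 : ∀ t ∈ Set.Icc (1 / 3 : ℝ) 1, (ν t).pts =
      insert ((k / 2 * t, k / 2 * (2 - t)), 0) diagSet) :
    (∀ s ∈ Set.Icc (0 : ℝ) 1, ∀ t ∈ Set.Icc (0 : ℝ) 1,
        pdist ∞ q (μ s) (μ t) = ENNReal.ofReal |t - s| * pdist ∞ q (μ 0) (μ 1)) ∧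
    (∀ s ∈ Set.Icc (0 : ℝ) 1, ∀ t ∈ Set.Icc (0 : ℝ) 1,
        pdist ∞ q (ν s) (ν t) = ENNReal.ofReal |t - s| * pdist ∞ q (ν 0) (ν 1)) ∧
    pdist ∞ q (μ 1) emptyD = 0 ∧ pdist ∞ q (ν 1) emptyD = 0 ∧
    (∀ t ∈ Set.Icc (1 / 3 : ℝ) 1, pdist ∞ q (μ t) (ν t) = 0) ∧
    (∀ t ∈ Set.Ico (0 : ℝ) (1 / 3), pdist ∞ q (μ t) (ν t) ≠ 0) := by
  have hj : 0 < j := lt_trans hl hlj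
  have hk : 0 < k := by linarith
  have hlk : 3 * l < k := by linarith
  have geod : ∀ (m : ℝ), 0 < m → 3 * m < k → ∀ (ρ : ℝ → Diagram),
      (∀ u ∈ Set.Icc (0:ℝ) (1/3), (ρ u).pts = insert ((k / 2 * u, k / 2 * (2 - u)), 0)
        (insert ((m / 2 * (3 * u), m / 2 * (2 - 3 * u)), 1) diagSet)) →
      (∀ u ∈ Set.Icc (1/3:ℝ) 1, (ρ u).pts =
        insert ((k / 2 * u, k / 2 * (2 - u)), 0) diagSet) →
      ∀ s ∈ Set.Icc (0:ℝ) 1, ∀ t ∈ Set.Icc (0:ℝ) 1,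
        pdist ∞ q (ρ s) (ρ t) = ENNReal.ofReal |t - s| * pdist ∞ q (ρ 0) (ρ 1) := by
    intro m hm hmk ρ hr1 hr2 s hs t ht
    have d01 : pdist ∞ q (ρ 0) (ρ 1) = ENNReal.ofReal (Cq q * (k/2*(1-0))) :=
      main_dist q hq hm hmk ρ hr1 hr2 le_rfl le_rfl zero_le_one
    rcases le_total s t with h | h
    · rw [main_dist q hq hm hmk ρ hr1 hr2 hs.1 ht.2 h, d01,
        ← ENNReal.ofReal_mul (abs_nonneg _)]
      congr 1
      rw [abs_of_nonneg (sub_nonneg.mpr h)]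
      ring
    · rw [pdist_symm q (ρ s) (ρ t), main_dist q hq hm hmk ρ hr1 hr2 ht.1 hs.2 h, d01,
        ← ENNReal.ofReal_mul (abs_nonneg _)]
      congr 1
      rw [abs_sub_comm, abs_of_nonneg (sub_nonneg.mpr h)]
      ring
  refine ⟨geod j hj hjk μ hμ1 hμ2, geod l hl hlk ν hν1 hν2, ?_, ?_, ?_, ?_⟩
  · refine pdist_zero_of_eq hq ?_
    rw [hμ2 1 ⟨by norm_num, le_rfl⟩]
    have hmem : ((k / 2 * 1, k / 2 * (2 - 1)), (0:ℕ)) ∈ diagSet := by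
      show k / 2 * 1 = k / 2 * (2 - 1); norm_num
    exact Set.insert_eq_self.mpr hmem
  · refine pdist_zero_of_eq hq ?_
    rw [hν2 1 ⟨by norm_num, le_rfl⟩]
    have hmem : ((k / 2 * 1, k / 2 * (2 - 1)), (0:ℕ)) ∈ diagSet := by
      show k / 2 * 1 = k / 2 * (2 - 1); norm_num
    exact Set.insert_eq_self.mpr hmem
  · intro t ht
    exact pdist_zero_of_eq hq ((hμ2 t ht).trans (hν2 t ht).symm)
  · intro t ht hzero
    have htl : 0 ≤ t := ht.1
    have htu : t < 1/3 := ht.2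
    have hw : ((j / 2 * (3 * t), j / 2 * (2 - 3 * t)), 1) ∈ (μ t).pts := by
      rw [hμ1 t ⟨htl, le_of_lt htu⟩]
      exact Set.mem_insert_of_mem _ (Set.mem_insert _ _)
    set δ := min (j*(1-3*t)/2) (min ((j-l)/4) ((k*(2-t) - j*(2-3*t))/4)) with hδdef
    have hδ : 0 < δ := lt_min (by nlinarith) (lt_min (by nlinarith) (by nlinarith))
    have hlow : ENNReal.ofReal (Cq q * δ) ≤ pdist ∞ q (μ t) (ν t) := by
      refine le_pdist_of_bound ⟨_, hw⟩ (fun φ => ?_)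
      have hy := (φ ⟨_, hw⟩).2
      set yv : (ℝ × ℝ) × ℕ := ((φ ⟨_, hw⟩ : (ν t).pts) : (ℝ × ℝ) × ℕ) with hyv
      clear_value yv
      refine le_trans ?_ (qnorm_ge hq _)
      refine mul_le_mul_of_nonneg_left ?_ (Cq_pos q).le
      have m1 : δ ≤ j*(1-3*t)/2 := min_le_left _ _
      have m2 : δ ≤ (j-l)/4 := le_trans (min_le_right _ _) (min_le_left _ _)
      have m3 : δ ≤ (k*(2-t) - j*(2-3*t))/4 := le_trans (min_le_right _ _) (min_le_right _ _)
      simp only [Prod.fst_sub, Prod.snd_sub]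
      rw [hν1 t ⟨htl, le_of_lt htu⟩] at hy
      rcases Set.mem_insert_iff.mp hy with heq | hy'
      · rw [heq]; dsimp only
        nlinarith [abs_nonneg (j / 2 * (3 * t) - k / 2 * t),
          neg_abs_le (j / 2 * (2 - 3 * t) - k / 2 * (2 - t))]
      rcases Set.mem_insert_iff.mp hy' with heq | hyd
      · rw [heq]; dsimp only
        nlinarith [abs_nonneg (j / 2 * (3 * t) - l / 2 * (3 * t)),
          le_abs_self (j / 2 * (2 - 3 * t) - l / 2 * (2 - 3 * t)),
          mul_nonneg (by linarith : (0:ℝ) ≤ j - l) (by linarith : (0:ℝ) ≤ 1 - 3*t)]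
      · have hd := diag_mem' hyd
        nlinarith [neg_abs_le (j / 2 * (3 * t) - yv.1.1),
          le_abs_self (j / 2 * (2 - 3 * t) - yv.1.2), hd, m1]
    rw [hzero] at hlow
    have hpos := ENNReal.ofReal_pos.mpr (mul_pos (Cq_pos q) hδ)
    exact absurd (le_antisymm hlow (zero_le ..)) (ne_of_gt hpos)
end

section
/- Convexity of costs across subdivided geodesics: let p ∈ [2,∞), let t_0 = 0 < t_1 < ⋯ < t_n = 1 be an equipartition t_i = i/n, and let a_{i,x} ≥ 0 (for x in a countable index set and 1 ≤ i ≤ n) satisfy ∑_x a_{i,x}^p = (D/n)^p for each i, for some D ≥ 0. Then ∑_x ( (1/t_m^{p−1}) (∑_{i=1}^m a_{i,x})^p + (1/(1−t_m)^{p−1}) (∑_{i=m+1}^n a_{i,x})^p ) ≤ D^p for any 1 ≤ m ≤ n−1. -/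
/-- Convexity of costs across a subdivided geodesic: if each leg of an `n`-leg
subdivision has total `p`-cost `(D/n)^p`, then the combined two-sided Jensen-type
cost at the breakpoint `t_m = m/n` is at most `D^p`. -/
theorem subdivided_geodesic_cost_bound (p : ℝ) (hp : 2 ≤ p) {ι : Type*} [Countable ι]
    (n : ℕ) (hn : 1 ≤ n) (a : ℕ → ι → ℝ) (ha : ∀ i x, 0 ≤ a i x)
    (D : ℝ) (hD : 0 ≤ D)
    (hSummable : ∀ i, Summable (fun x => a i x ^ p))
    (hleg : ∀ i, 1 ≤ i → i ≤ n → ∑' x, a i x ^ p = (D / n) ^ p)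
    (m : ℕ) (hm1 : 1 ≤ m) (hm2 : m < n) :
    ∑' x, ((1 / ((m : ℝ) / n) ^ (p - 1)) * (∑ i ∈ Finset.Icc 1 m, a i x) ^ p
        + (1 / (1 - (m : ℝ) / n) ^ (p - 1)) * (∑ i ∈ Finset.Icc (m + 1) n, a i x) ^ p)
      ≤ D ^ p := by
  have hp1 : (1 : ℝ) ≤ p := by linarith
  have hn0 : (0 : ℝ) < n := by exact_mod_cast hn
  have hm0 : (0 : ℝ) < m := by exact_mod_cast hm1
  have hnm0 : (0 : ℝ) < (n : ℝ) - m := by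
    have : (m : ℝ) < n := by exact_mod_cast hm2
    linarith
  -- the majorant
  set g : ι → ℝ := fun x => (n : ℝ) ^ (p - 1) * ∑ i ∈ Finset.Icc 1 n, a i x ^ p with hg
  have hgsummable : Summable g := by
    apply Summable.mul_left
    exact summable_sum fun i _ => hSummable i
  -- pointwise bound
  have hpoint : ∀ x,
      (1 / ((m : ℝ) / n) ^ (p - 1)) * (∑ i ∈ Finset.Icc 1 m, a i x) ^ p
        + (1 / (1 - (m : ℝ) / n) ^ (p - 1)) * (∑ i ∈ Finset.Icc (m + 1) n, a i x) ^ p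
        ≤ g x := by
    intro x
    have h1 : (∑ i ∈ Finset.Icc 1 m, a i x) ^ p
        ≤ ((Finset.Icc 1 m).card : ℝ) ^ (p - 1) * ∑ i ∈ Finset.Icc 1 m, a i x ^ p :=
      Real.rpow_sum_le_const_mul_sum_rpow_of_nonneg _ hp1 fun i _ => ha i x
    have h2 : (∑ i ∈ Finset.Icc (m + 1) n, a i x) ^ p
        ≤ ((Finset.Icc (m + 1) n).card : ℝ) ^ (p - 1)
            * ∑ i ∈ Finset.Icc (m + 1) n, a i x ^ p :=
      Real.rpow_sum_le_const_mul_sum_rpow_of_nonneg _ hp1 fun i _ => ha i x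
    have hcard1 : ((Finset.Icc 1 m).card : ℝ) = m := by
      simp [Nat.card_Icc]
    have hcard2 : ((Finset.Icc (m + 1) n).card : ℝ) = (n : ℝ) - m := by
      rw [Nat.card_Icc]
      have : n + 1 - (m + 1) = n - m := by omega
      rw [this]
      push_cast [Nat.cast_sub hm2.le]
      ring
    have hw1 : (1 / ((m : ℝ) / n) ^ (p - 1)) * ((m : ℝ)) ^ (p - 1) = (n : ℝ) ^ (p - 1) := by
      rw [Real.div_rpow hm0.le hn0.le, one_div, inv_div, div_mul_eq_mul_div,
        mul_div_assoc, div_self (by positivity), mul_one]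
    have hw2 : (1 / (1 - (m : ℝ) / n) ^ (p - 1)) * ((n : ℝ) - m) ^ (p - 1)
        = (n : ℝ) ^ (p - 1) := by
      have : 1 - (m : ℝ) / n = ((n : ℝ) - m) / n := by field_simp
      rw [this, Real.div_rpow hnm0.le hn0.le, one_div, inv_div, div_mul_eq_mul_div,
        mul_div_assoc, div_self (by positivity), mul_one]
    have hs1 : (1 / ((m : ℝ) / n) ^ (p - 1)) * (∑ i ∈ Finset.Icc 1 m, a i x) ^ p
        ≤ (n : ℝ) ^ (p - 1) * ∑ i ∈ Finset.Icc 1 m, a i x ^ p := by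
      calc (1 / ((m : ℝ) / n) ^ (p - 1)) * (∑ i ∈ Finset.Icc 1 m, a i x) ^ p
          ≤ (1 / ((m : ℝ) / n) ^ (p - 1))
              * (((Finset.Icc 1 m).card : ℝ) ^ (p - 1) * ∑ i ∈ Finset.Icc 1 m, a i x ^ p) := by
            apply mul_le_mul_of_nonneg_left h1; positivity
        _ = (n : ℝ) ^ (p - 1) * ∑ i ∈ Finset.Icc 1 m, a i x ^ p := by
            rw [hcard1, ← mul_assoc, hw1]
    have hs2 : (1 / (1 - (m : ℝ) / n) ^ (p - 1)) * (∑ i ∈ Finset.Icc (m + 1) n, a i x) ^ p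
        ≤ (n : ℝ) ^ (p - 1) * ∑ i ∈ Finset.Icc (m + 1) n, a i x ^ p := by
      have hpos : (0:ℝ) ≤ 1 / (1 - (m : ℝ) / n) ^ (p - 1) := by
        have : (0:ℝ) < 1 - (m : ℝ) / n := by
          rw [sub_pos, div_lt_one hn0]; exact_mod_cast hm2
        positivity
      calc (1 / (1 - (m : ℝ) / n) ^ (p - 1)) * (∑ i ∈ Finset.Icc (m + 1) n, a i x) ^ p
          ≤ (1 / (1 - (m : ℝ) / n) ^ (p - 1))
              * (((Finset.Icc (m + 1) n).card : ℝ) ^ (p - 1)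
                * ∑ i ∈ Finset.Icc (m + 1) n, a i x ^ p) :=
            mul_le_mul_of_nonneg_left h2 hpos
        _ = (n : ℝ) ^ (p - 1) * ∑ i ∈ Finset.Icc (m + 1) n, a i x ^ p := by
            rw [hcard2, ← mul_assoc, hw2]
    have hsplit : Finset.Icc 1 n = Finset.Icc 1 m ∪ Finset.Icc (m + 1) n := by
      ext i; simp only [Finset.mem_Icc, Finset.mem_union]; omega
    have hdisj : Disjoint (Finset.Icc 1 m) (Finset.Icc (m + 1) n) := by
      rw [Finset.disjoint_left]; intro i hi hi'
      simp only [Finset.mem_Icc] at hi hi'; omega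
    have : g x = (n : ℝ) ^ (p - 1) * ∑ i ∈ Finset.Icc 1 m, a i x ^ p
        + (n : ℝ) ^ (p - 1) * ∑ i ∈ Finset.Icc (m + 1) n, a i x ^ p := by
      rw [hg]; simp only
      rw [hsplit, Finset.sum_union hdisj, mul_add]
    rw [this]
    exact add_le_add hs1 hs2
  -- summability of the LHS
  have hnonneg : ∀ x, 0 ≤ (1 / ((m : ℝ) / n) ^ (p - 1)) * (∑ i ∈ Finset.Icc 1 m, a i x) ^ p
      + (1 / (1 - (m : ℝ) / n) ^ (p - 1)) * (∑ i ∈ Finset.Icc (m + 1) n, a i x) ^ p := by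
    intro x
    have h1 : (0:ℝ) ≤ ∑ i ∈ Finset.Icc 1 m, a i x := Finset.sum_nonneg fun i _ => ha i x
    have h2 : (0:ℝ) ≤ ∑ i ∈ Finset.Icc (m + 1) n, a i x := Finset.sum_nonneg fun i _ => ha i x
    have h3 : (0:ℝ) < 1 - (m : ℝ) / n := by
      rw [sub_pos, div_lt_one hn0]; exact_mod_cast hm2
    positivity
  have hfsummable : Summable (fun x =>
      (1 / ((m : ℝ) / n) ^ (p - 1)) * (∑ i ∈ Finset.Icc 1 m, a i x) ^ p
        + (1 / (1 - (m : ℝ) / n) ^ (p - 1)) * (∑ i ∈ Finset.Icc (m + 1) n, a i x) ^ p) :=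
    Summable.of_nonneg_of_le hnonneg hpoint hgsummable
  calc ∑' x, ((1 / ((m : ℝ) / n) ^ (p - 1)) * (∑ i ∈ Finset.Icc 1 m, a i x) ^ p
        + (1 / (1 - (m : ℝ) / n) ^ (p - 1)) * (∑ i ∈ Finset.Icc (m + 1) n, a i x) ^ p)
      ≤ ∑' x, g x := Summable.tsum_le_tsum hpoint hfsummable hgsummable
    _ = (n : ℝ) ^ (p - 1) * ∑ i ∈ Finset.Icc 1 n, ∑' x, a i x ^ p := by
        rw [hg, tsum_mul_left]
        congr 1
        exact Summable.tsum_finsetSum fun i _ => hSummable i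
    _ = (n : ℝ) ^ (p - 1) * ((n : ℝ) * (D / n) ^ p) := by
        congr 1
        have : ∀ i ∈ Finset.Icc 1 n, ∑' x, a i x ^ p = (D / (n:ℝ)) ^ p := by
          intro i hi; rw [Finset.mem_Icc] at hi; exact hleg i hi.1 hi.2
        rw [Finset.sum_congr rfl this, Finset.sum_const, Nat.card_Icc]
        simp [nsmul_eq_mul]
    _ = D ^ p := by
        rw [Real.div_rpow hD hn0.le]
        rw [show (n : ℝ) ^ (p - 1) * ((n:ℝ) * (D ^ p / (n:ℝ) ^ p)) =
          ((n : ℝ) ^ (p - 1) * (n:ℝ) ^ (1:ℝ)) * (D ^ p / (n:ℝ) ^ p) by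
            rw [Real.rpow_one]; ring]
        rw [← Real.rpow_add hn0, sub_add_cancel]
        field_simp
end

section
/- The pseudometric d_p[l^q] on persistence diagrams is not a metric: there exist distinct persistence diagrams X ≠ Y with d_p[l^q](X,Y) = 0 for all p, q ∈ [1,∞]. Concretely, if A and B are two distinct countable dense subsets of [0,1], then X := {(0,a) : a ∈ A} ∪ Δ^∞ and Y := {(0,b) : b ∈ B} ∪ Δ^∞ satisfy d_p[l^q](X,Y) = 0 for p = ∞ (and the infimum of matching cost is 0). -/
open scoped ENNReal
open Set

lemma infinite_inter_Ioo {S : Set ℝ} (hSd : Set.Icc (0:ℝ) 1 ⊆ closure S)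
    {x y : ℝ} (hx : 0 ≤ x) (hy : y ≤ 1) (hxy : x < y) : (S ∩ Set.Ioo x y).Infinite := by
  have key : ∀ x y : ℝ, 0 ≤ x → y ≤ 1 → x < y → (S ∩ Set.Ioo x y).Nonempty := by
    intro x y hx hy hxy
    have hz : (x+y)/2 ∈ Set.Icc (0:ℝ) 1 := ⟨by linarith, by linarith⟩
    have h2 := mem_closure_iff.mp (hSd hz) (Set.Ioo x y) isOpen_Ioo
      ⟨by linarith, by linarith⟩
    exact h2.imp fun b hb => ⟨hb.2, hb.1⟩
  intro hfin
  obtain ⟨m, hm, hmin⟩ := Set.exists_min_image _ id hfin (key x y hx hy hxy)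
  obtain ⟨b, hb⟩ := key x m hx (le_of_lt (lt_of_lt_of_le hm.2.2 hy)) hm.2.1
  have : m ≤ b := hmin b ⟨hb.1, hb.2.1, lt_trans hb.2.2 hm.2.2⟩
  exact absurd hb.2.2 (not_lt.mpr this)

lemma infinite_of_dense {S : Set ℝ} (hS : S ⊆ Set.Ioo 0 1)
    (hSd : Set.Icc (0:ℝ) 1 ⊆ closure S) : S.Infinite :=
  (infinite_inter_Ioo hSd le_rfl le_rfl one_pos).mono inter_subset_left

lemma pick_near {S : Set ℝ} (hSd : Set.Icc (0:ℝ) 1 ⊆ closure S)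
    {a : ℝ} (ha : a ∈ Set.Ioo (0:ℝ) 1) {δ : ℝ} (hδ : 0 < δ) {T : Set ℝ} (hT : T.Finite) :
    ∃ b ∈ S, b ∉ T ∧ |a - b| < δ := by
  set x := max (a - δ) 0 with hxdef
  set y := min (a + δ) 1 with hydef
  have hx : 0 ≤ x := le_max_right _ _
  have hy : y ≤ 1 := min_le_right _ _
  have hxa : x < a := max_lt (by linarith) ha.1
  have hay : a < y := lt_min (by linarith) ha.2
  obtain ⟨b, hb⟩ := ((infinite_inter_Ioo hSd hx hy (lt_trans hxa hay)).diff hT).nonempty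
  refine ⟨b, hb.1.1, hb.2, ?_⟩
  have h1 : a - δ ≤ x := le_max_left _ _
  have h2 : y ≤ a + δ := min_le_left _ _
  have hb1 := hb.1.2.1
  have hb2 := hb.1.2.2
  rw [abs_sub_lt_iff]
  constructor <;> linarith

/-- The property of the pair added at step `k` of the back-and-forth construction. -/
def NextP (A B : Set ℝ) (eA eB : ℕ → ℝ) (ε : ℝ) (k : ℕ) (l : List (ℝ × ℝ)) (p : ℝ × ℝ) : Prop :=
  p.1 ∈ A ∧ p.2 ∈ B ∧ p.1 ∉ l.map Prod.fst ∧ p.2 ∉ l.map Prod.snd ∧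
  |p.1 - p.2| < ε * (1/2)^k ∧
  (Even k → eA (k/2) ∈ p.1 :: l.map Prod.fst) ∧
  (¬ Even k → eB (k/2) ∈ p.2 :: l.map Prod.snd)

lemma nextP_exists {A B : Set ℝ} (hA : A ⊆ Set.Ioo 0 1) (hB : B ⊆ Set.Ioo 0 1)
    (hAd : Set.Icc (0:ℝ) 1 ⊆ closure A) (hBd : Set.Icc (0:ℝ) 1 ⊆ closure B)
    {eA eB : ℕ → ℝ} (heA : ∀ n, eA n ∈ A) (heB : ∀ n, eB n ∈ B)
    {ε : ℝ} (hε : 0 < ε) (k : ℕ) (l : List (ℝ × ℝ)) :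
    ∃ p, NextP A B eA eB ε k l p := by
  have hδ : 0 < ε * (1/2)^k := by positivity
  have hTf : ({x | x ∈ l.map Prod.fst} : Set ℝ).Finite := List.finite_toSet _
  have hTs : ({x | x ∈ l.map Prod.snd} : Set ℝ).Finite := List.finite_toSet _
  by_cases hk : Even k
  · -- choose a first
    obtain ⟨a, ha, haT, hacov⟩ :
        ∃ a ∈ A, a ∉ l.map Prod.fst ∧ eA (k/2) ∈ a :: l.map Prod.fst := by
      by_cases hmem : eA (k/2) ∈ l.map Prod.fst
      · obtain ⟨a, ha⟩ := ((infinite_of_dense hA hAd).diff hTf).nonempty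
        exact ⟨a, ha.1, ha.2, List.mem_cons_of_mem _ hmem⟩
      · exact ⟨eA (k/2), heA _, hmem, List.mem_cons_self⟩
    obtain ⟨b, hb, hbT, hab⟩ := pick_near hBd (hA ha) hδ hTs
    exact ⟨(a, b), ha, hb, haT, hbT, hab, fun _ => hacov, fun h => absurd hk h⟩
  · -- choose b first
    obtain ⟨b, hb, hbT, hbcov⟩ :
        ∃ b ∈ B, b ∉ l.map Prod.snd ∧ eB (k/2) ∈ b :: l.map Prod.snd := by
      by_cases hmem : eB (k/2) ∈ l.map Prod.snd
      · obtain ⟨b, hb⟩ := ((infinite_of_dense hB hBd).diff hTs).nonempty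
        exact ⟨b, hb.1, hb.2, List.mem_cons_of_mem _ hmem⟩
      · exact ⟨eB (k/2), heB _, hmem, List.mem_cons_self⟩
    obtain ⟨a, ha, haT, hba⟩ := pick_near hAd (hB hb) hδ hTf
    refine ⟨(a, b), ha, hb, haT, hbT, ?_, fun h => absurd h hk, fun _ => hbcov⟩
    rwa [abs_sub_comm]

lemma exists_small_equiv (A B : Set ℝ)
    (ε : ℝ)
    (hex : ∀ (eA eB : ℕ → ℝ), (∀ n, eA n ∈ A) → (∀ n, eB n ∈ B) →
      ∀ (k : ℕ) (l : List (ℝ × ℝ)), ∃ p, NextP A B eA eB ε k l p)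
    (hAne : A.Nonempty) (hBne : B.Nonempty)
    (hAc : A.Countable) (hBc : B.Countable) :
    ∃ (g : A ≃ B) (nI : A → ℕ), Function.Injective nI ∧
      ∀ a : A, |(a:ℝ) - (g a : ℝ)| < ε * (1/2)^(nI a) := by
  obtain ⟨eA, hrA⟩ := hAc.exists_eq_range hAne
  obtain ⟨eB, hrB⟩ := hBc.exists_eq_range hBne
  have heA : ∀ n, eA n ∈ A := fun n => hrA ▸ Set.mem_range_self n
  have heB : ∀ n, eB n ∈ B := fun n => hrB ▸ Set.mem_range_self n
  have hex' := hex eA eB heA heB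
  let L : ℕ → List (ℝ × ℝ) := fun n =>
    Nat.rec [] (fun k l => l ++ [Classical.choose (hex' k l)]) n
  let pr : ℕ → ℝ × ℝ := fun k => Classical.choose (hex' k (L k))
  have hL : ∀ n, L (n+1) = L n ++ [pr n] := fun n => rfl
  have hspec : ∀ k, NextP A B eA eB ε k (L k) (pr k) :=
    fun k => Classical.choose_spec (hex' k (L k))
  have hfst : ∀ n, (L n).map Prod.fst = (List.range n).map (fun k => (pr k).1) := by
    intro n; induction n with
    | zero => rfl
    | succ n ih => rw [hL, List.range_succ]; simp [ih]
  have hsnd : ∀ n, (L n).map Prod.snd = (List.range n).map (fun k => (pr k).2) := by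
    intro n; induction n with
    | zero => rfl
    | succ n ih => rw [hL, List.range_succ]; simp [ih]
  have hmemf : ∀ n x, x ∈ (L n).map Prod.fst ↔ ∃ k < n, (pr k).1 = x := by
    intro n x; rw [hfst]; simp [List.mem_map]
  have hmems : ∀ n x, x ∈ (L n).map Prod.snd ↔ ∃ k < n, (pr k).2 = x := by
    intro n x; rw [hsnd]; simp [List.mem_map]
  -- injectivity
  have keyf : ∀ i j, i < j → (pr i).1 ≠ (pr j).1 := by
    intro i j hij h
    exact (hspec j).2.2.1 ((hmemf j _).mpr ⟨i, hij, h⟩)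
  have keys : ∀ i j, i < j → (pr i).2 ≠ (pr j).2 := by
    intro i j hij h
    exact (hspec j).2.2.2.1 ((hmems j _).mpr ⟨i, hij, h⟩)
  have injf : Function.Injective (fun k => (pr k).1) := by
    intro i j h
    rcases lt_trichotomy i j with hij | hij | hij
    · exact absurd h (keyf i j hij)
    · exact hij
    · exact absurd h.symm (keyf j i hij)
  have injs : Function.Injective (fun k => (pr k).2) := by
    intro i j h
    rcases lt_trichotomy i j with hij | hij | hij
    · exact absurd h (keys i j hij)
    · exact hij
    · exact absurd h.symm (keys j i hij)
  -- surjectivity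
  have surjf : ∀ a ∈ A, ∃ k, (pr k).1 = a := by
    intro a ha
    obtain ⟨m, rfl⟩ := hrA ▸ ha
    have h2 := (hspec (2*m)).2.2.2.2.2.1 (even_two_mul m)
    rw [Nat.mul_div_cancel_left m (by norm_num)] at h2
    rcases List.mem_cons.mp h2 with h | h
    · exact ⟨2*m, h.symm⟩
    · obtain ⟨k, _, hk⟩ := (hmemf _ _).mp h
      exact ⟨k, hk⟩
  have surjs : ∀ b ∈ B, ∃ k, (pr k).2 = b := by
    intro b hb
    obtain ⟨m, rfl⟩ := hrB ▸ hb
    have h2 := (hspec (2*m+1)).2.2.2.2.2.2 (by simp [Nat.even_add_one, Nat.even_mul])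
    have : (2*m+1)/2 = m := by omega
    rw [this] at h2
    rcases List.mem_cons.mp h2 with h | h
    · exact ⟨2*m+1, h.symm⟩
    · obtain ⟨k, _, hk⟩ := (hmems (2*m+1) (eB m)).mp h
      exact ⟨k, hk⟩
  -- build the equivalences
  let fA : ℕ → A := fun k => ⟨(pr k).1, (hspec k).1⟩
  let fB : ℕ → B := fun k => ⟨(pr k).2, (hspec k).2.1⟩
  have hfAbij : Function.Bijective fA := by
    constructor
    · intro i j h
      exact injf (congrArg Subtype.val h)
    · rintro ⟨a, ha⟩
      obtain ⟨k, hk⟩ := surjf a ha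
      exact ⟨k, Subtype.ext hk⟩
  have hfBbij : Function.Bijective fB := by
    constructor
    · intro i j h
      exact injs (congrArg Subtype.val h)
    · rintro ⟨b, hb⟩
      obtain ⟨k, hk⟩ := surjs b hb
      exact ⟨k, Subtype.ext hk⟩
  let eqA := Equiv.ofBijective fA hfAbij
  let eqB := Equiv.ofBijective fB hfBbij
  refine ⟨eqA.symm.trans eqB, fun a => eqA.symm a, eqA.symm.injective, ?_⟩
  intro a
  set k := eqA.symm a with hk
  have ha : a = fA k := by
    have := eqA.apply_symm_apply a
    rw [← hk] at this
    exact this.symm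
  have hval : (a : ℝ) = (pr k).1 := congrArg Subtype.val ha
  have hgval : ((eqA.symm.trans eqB) a : ℝ) = (pr k).2 := rfl
  rw [hval, hgval]
  exact (hspec k).2.2.2.2.1

lemma qnorm_pair {q : ℝ≥0∞} (hq : 1 ≤ q) {v : ℝ × ℝ} (hv : v.1 = 0) :
    qnorm q v = |v.2| := by
  unfold qnorm
  rw [hv, abs_zero]
  split_ifs with h
  · exact max_eq_right (abs_nonneg _)
  · have ht : 1 ≤ q.toReal := by
      rw [← ENNReal.toReal_one]
      exact (ENNReal.toReal_le_toReal (by simp) h).mpr hq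
    have ht0 : q.toReal ≠ 0 := by linarith
    rw [Real.zero_rpow ht0, zero_add, one_div,
      ← Real.rpow_mul (abs_nonneg _), mul_inv_cancel₀ ht0, Real.rpow_one]

lemma exists_phi {A B : Set ℝ} (hA : A ⊆ Set.Ioo 0 1) (hB : B ⊆ Set.Ioo 0 1)
    {X Y : Diagram}
    (hX : X.pts = {z | ∃ a ∈ A, z = (((0 : ℝ), a), 0)} ∪ diagSet)
    (hY : Y.pts = {z | ∃ b ∈ B, z = (((0 : ℝ), b), 0)} ∪ diagSet)
    (g : A ≃ B) (nI : A → ℕ) (hnI : Function.Injective nI)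
    {ε : ℝ} (hε : 0 ≤ ε)
    (hd : ∀ a : A, |(a:ℝ) - (g a : ℝ)| ≤ ε * (1/2)^(nI a)) :
    ∃ (φ : X.pts ≃ Y.pts) (m : X.pts → ℕ),
      (∀ x : X.pts, ((x : (ℝ×ℝ)×ℕ).1 - ((φ x : (ℝ×ℝ)×ℕ)).1).1 = 0) ∧
      (∀ x : X.pts, |((x : (ℝ×ℝ)×ℕ).1 - ((φ x : (ℝ×ℝ)×ℕ)).1).2| ≤ ε * (1/2)^(m x)) ∧
      Set.InjOn m {x : X.pts | (x : (ℝ×ℝ)×ℕ).1 ≠ ((φ x : (ℝ×ℝ)×ℕ)).1} := by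
  classical
  have hXmem : ∀ z : (ℝ×ℝ)×ℕ, z ∈ X.pts → z.1.1 ≠ z.1.2 →
      z.1.2 ∈ A ∧ z = (((0:ℝ), z.1.2), 0) := by
    intro z hz hne
    rw [hX] at hz
    rcases hz with ⟨a, ha, rfl⟩ | h
    · exact ⟨ha, rfl⟩
    · exact absurd h hne
  have hYmem : ∀ z : (ℝ×ℝ)×ℕ, z ∈ Y.pts → z.1.1 ≠ z.1.2 →
      z.1.2 ∈ B ∧ z = (((0:ℝ), z.1.2), 0) := by
    intro z hz hne
    rw [hY] at hz
    rcases hz with ⟨b, hb, rfl⟩ | h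
    · exact ⟨hb, rfl⟩
    · exact absurd h hne
  have hmemYB : ∀ b : B, ((((0:ℝ), (b:ℝ)), 0) : (ℝ×ℝ)×ℕ) ∈ Y.pts := by
    intro b; rw [hY]; exact Or.inl ⟨b, b.2, rfl⟩
  have hmemXA : ∀ a : A, ((((0:ℝ), (a:ℝ)), 0) : (ℝ×ℝ)×ℕ) ∈ X.pts := by
    intro a; rw [hX]; exact Or.inl ⟨a, a.2, rfl⟩
  let F : X.pts → Y.pts := fun x =>
    if h : (x : (ℝ×ℝ)×ℕ).1.1 = (x : (ℝ×ℝ)×ℕ).1.2 then ⟨x, by rw [hY]; exact Or.inr h⟩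
    else ⟨(((0:ℝ), (g ⟨(x : (ℝ×ℝ)×ℕ).1.2, (hXmem _ x.2 h).1⟩ : ℝ)), 0),
      hmemYB _⟩
  let G : Y.pts → X.pts := fun y =>
    if h : (y : (ℝ×ℝ)×ℕ).1.1 = (y : (ℝ×ℝ)×ℕ).1.2 then ⟨y, by rw [hX]; exact Or.inr h⟩
    else ⟨(((0:ℝ), (g.symm ⟨(y : (ℝ×ℝ)×ℕ).1.2, (hYmem _ y.2 h).1⟩ : ℝ)), 0),
      hmemXA _⟩
  have hGF : ∀ x, G (F x) = x := by
    intro x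
    by_cases h : (x : (ℝ×ℝ)×ℕ).1.1 = (x : (ℝ×ℝ)×ℕ).1.2
    · simp only [F, G, dif_pos h]
    · simp only [F, G, dif_neg h]
      have hne : ((((0:ℝ), (g ⟨(x : (ℝ×ℝ)×ℕ).1.2, (hXmem _ x.2 h).1⟩ : ℝ)), 0) :
          (ℝ×ℝ)×ℕ).1.1 ≠ ((((0:ℝ), (g ⟨(x : (ℝ×ℝ)×ℕ).1.2, (hXmem _ x.2 h).1⟩ : ℝ)), 0) :
          (ℝ×ℝ)×ℕ).1.2 := by
        intro hc
        have hc' : (0:ℝ) = (g ⟨(x : (ℝ×ℝ)×ℕ).1.2, (hXmem _ x.2 h).1⟩ : ℝ) := hc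
        have := (hB (g ⟨(x : (ℝ×ℝ)×ℕ).1.2, (hXmem _ x.2 h).1⟩).2).1
        linarith
      rw [dif_neg hne]
      apply Subtype.ext
      have h2 : g.symm ⟨(g ⟨(x : (ℝ×ℝ)×ℕ).1.2, (hXmem _ x.2 h).1⟩ : ℝ),
          (hYmem _ (hmemYB _) hne).1⟩ = ⟨(x : (ℝ×ℝ)×ℕ).1.2, (hXmem _ x.2 h).1⟩ :=
        g.symm_apply_apply _
      rw [h2]
      exact ((hXmem _ x.2 h).2).symm
  have hFG : ∀ y, F (G y) = y := by
    intro y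
    by_cases h : (y : (ℝ×ℝ)×ℕ).1.1 = (y : (ℝ×ℝ)×ℕ).1.2
    · simp only [F, G, dif_pos h]
    · simp only [F, G, dif_neg h]
      have hne : ((((0:ℝ), (g.symm ⟨(y : (ℝ×ℝ)×ℕ).1.2, (hYmem _ y.2 h).1⟩ : ℝ)), 0) :
          (ℝ×ℝ)×ℕ).1.1 ≠ ((((0:ℝ), (g.symm ⟨(y : (ℝ×ℝ)×ℕ).1.2, (hYmem _ y.2 h).1⟩ : ℝ)), 0) :
          (ℝ×ℝ)×ℕ).1.2 := by
        intro hc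
        have hc' : (0:ℝ) = (g.symm ⟨(y : (ℝ×ℝ)×ℕ).1.2, (hYmem _ y.2 h).1⟩ : ℝ) := hc
        have := (hA (g.symm ⟨(y : (ℝ×ℝ)×ℕ).1.2, (hYmem _ y.2 h).1⟩).2).1
        linarith
      rw [dif_neg hne]
      apply Subtype.ext
      have h2 : g ⟨(g.symm ⟨(y : (ℝ×ℝ)×ℕ).1.2, (hYmem _ y.2 h).1⟩ : ℝ),
          (hXmem _ (hmemXA _) hne).1⟩ = ⟨(y : (ℝ×ℝ)×ℕ).1.2, (hYmem _ y.2 h).1⟩ :=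
        g.apply_symm_apply _
      rw [h2]
      exact ((hYmem _ y.2 h).2).symm
  let φ : X.pts ≃ Y.pts := ⟨F, G, hGF, hFG⟩
  let m : X.pts → ℕ := fun x =>
    if h : (x : (ℝ×ℝ)×ℕ).1.1 = (x : (ℝ×ℝ)×ℕ).1.2 then 0
    else nI ⟨(x : (ℝ×ℝ)×ℕ).1.2, (hXmem _ x.2 h).1⟩
  have hφ_diag : ∀ x : X.pts, (h : (x : (ℝ×ℝ)×ℕ).1.1 = (x : (ℝ×ℝ)×ℕ).1.2) →
      ((φ x : (ℝ×ℝ)×ℕ)) = (x : (ℝ×ℝ)×ℕ) := by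
    intro x h
    show ((F x : (ℝ×ℝ)×ℕ)) = _
    simp only [F, dif_pos h]
  have hφ_off : ∀ x : X.pts, (h : ¬ (x : (ℝ×ℝ)×ℕ).1.1 = (x : (ℝ×ℝ)×ℕ).1.2) →
      ((φ x : (ℝ×ℝ)×ℕ)) = (((0:ℝ), (g ⟨(x : (ℝ×ℝ)×ℕ).1.2, (hXmem _ x.2 h).1⟩ : ℝ)), 0) := by
    intro x h
    show ((F x : (ℝ×ℝ)×ℕ)) = _
    simp only [F, dif_neg h]
  refine ⟨φ, m, ?_, ?_, ?_⟩
  · intro x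
    by_cases h : (x : (ℝ×ℝ)×ℕ).1.1 = (x : (ℝ×ℝ)×ℕ).1.2
    · rw [hφ_diag x h]; simp
    · rw [hφ_off x h]
      have hx11 : (x : (ℝ×ℝ)×ℕ).1.1 = 0 :=
        congrArg (fun z : (ℝ×ℝ)×ℕ => z.1.1) (hXmem _ x.2 h).2
      show (x : (ℝ×ℝ)×ℕ).1.1 - (0:ℝ) = 0
      rw [hx11, sub_zero]
  · intro x
    by_cases h : (x : (ℝ×ℝ)×ℕ).1.1 = (x : (ℝ×ℝ)×ℕ).1.2
    · rw [hφ_diag x h]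
      simp only [sub_self]
      have : (m x) = 0 := dif_pos h
      rw [this]
      simpa using hε
    · rw [hφ_off x h]
      have hmx : m x = nI ⟨(x : (ℝ×ℝ)×ℕ).1.2, (hXmem _ x.2 h).1⟩ := dif_neg h
      rw [hmx]
      exact hd ⟨(x : (ℝ×ℝ)×ℕ).1.2, (hXmem _ x.2 h).1⟩
  · intro x hx y hy hmxy
    have hxo : ¬ (x : (ℝ×ℝ)×ℕ).1.1 = (x : (ℝ×ℝ)×ℕ).1.2 := by
      intro h
      exact hx (by rw [hφ_diag x h])
    have hyo : ¬ (y : (ℝ×ℝ)×ℕ).1.1 = (y : (ℝ×ℝ)×ℕ).1.2 := by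
      intro h
      exact hy (by rw [hφ_diag y h])
    have e1 : m x = nI ⟨(x : (ℝ×ℝ)×ℕ).1.2, (hXmem _ x.2 hxo).1⟩ := dif_neg hxo
    have e2 : m y = nI ⟨(y : (ℝ×ℝ)×ℕ).1.2, (hXmem _ y.2 hyo).1⟩ := dif_neg hyo
    have h2 := hnI (e1.symm.trans (hmxy.trans e2))
    have h3 : (x : (ℝ×ℝ)×ℕ).1.2 = (y : (ℝ×ℝ)×ℕ).1.2 := congrArg Subtype.val h2
    apply Subtype.ext
    rw [(hXmem _ x.2 hxo).2, (hXmem _ y.2 hyo).2, h3]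

/-- `d_p[l^q]` is only a pseudometric: if `A ≠ B` are countable subsets of `(0,1)` that
are dense in `[0,1]`, then the diagrams `X = {(0,a) : a ∈ A} ∪ Δ^∞` and
`Y = {(0,b) : b ∈ B} ∪ Δ^∞` are distinct but at `d_p[l^q]`-distance zero for all
`p, q ∈ [1,∞]`. -/
theorem pdist_not_a_metric (A B : Set ℝ)
    (hA : A ⊆ Set.Ioo (0 : ℝ) 1) (hB : B ⊆ Set.Ioo (0 : ℝ) 1)
    (hAc : A.Countable) (hBc : B.Countable)
    (hAd : Set.Icc (0 : ℝ) 1 ⊆ closure A) (hBd : Set.Icc (0 : ℝ) 1 ⊆ closure B)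
    (hAB : A ≠ B) (X Y : Diagram)
    (hX : X.pts = {z | ∃ a ∈ A, z = (((0 : ℝ), a), 0)} ∪ diagSet)
    (hY : Y.pts = {z | ∃ b ∈ B, z = (((0 : ℝ), b), 0)} ∪ diagSet) :
    X.pts ≠ Y.pts ∧ ∀ p q : ℝ≥0∞, 1 ≤ p → 1 ≤ q → pdist p q X Y = 0 := by
  classical
  constructor
  · intro hEq
    apply hAB
    apply Set.Subset.antisymm
    · intro a ha
      have hmem : ((((0:ℝ), a), 0) : (ℝ×ℝ)×ℕ) ∈ Y.pts := by
        rw [← hEq, hX]; exact Or.inl ⟨a, ha, rfl⟩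
      rw [hY] at hmem
      rcases hmem with ⟨b, hb, heq⟩ | h
      · have hab : a = b := congrArg (fun z : (ℝ×ℝ)×ℕ => z.1.2) heq
        rwa [hab]
      · have h0 : (0:ℝ) = a := h
        have := (hA ha).1
        rw [← h0] at this
        exact absurd this (lt_irrefl _)
    · intro b hb
      have hmem : ((((0:ℝ), b), 0) : (ℝ×ℝ)×ℕ) ∈ X.pts := by
        rw [hEq, hY]; exact Or.inl ⟨b, hb, rfl⟩
      rw [hX] at hmem
      rcases hmem with ⟨a, ha, heq⟩ | h
      · have hab : b = a := congrArg (fun z : (ℝ×ℝ)×ℕ => z.1.2) heq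
        rwa [hab]
      · have h0 : (0:ℝ) = b := h
        have := (hB hb).1
        rw [← h0] at this
        exact absurd this (lt_irrefl _)
  · intro p q hp hq
    refine le_antisymm ?_ zero_le
    have key : ∀ ε : ℝ, 0 < ε → ε ≤ 1 → pdist p q X Y ≤ ENNReal.ofReal ε * 2 := by
      intro ε hε hε1
      have hANe := (infinite_of_dense hA hAd).nonempty
      have hBNe := (infinite_of_dense hB hBd).nonempty
      obtain ⟨g, nI, hnI, hd⟩ := exists_small_equiv A B ε
        (fun eA eB heA heB k l => nextP_exists hA hB hAd hBd heA heB hε k l)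
        hANe hBNe hAc hBc
      obtain ⟨φ, m, hfst0, hbound, hinj⟩ := exists_phi hA hB hX hY g nI hnI hε.le
        (fun a => (hd a).le)
      refine le_trans (iInf_le _ φ) ?_
      have hqnorm : ∀ x : X.pts,
          qnorm q ((x : (ℝ×ℝ)×ℕ).1 - ((φ x : (ℝ×ℝ)×ℕ)).1) =
            |((x : (ℝ×ℝ)×ℕ).1 - ((φ x : (ℝ×ℝ)×ℕ)).1).2| :=
        fun x => qnorm_pair hq (hfst0 x)
      set d : X.pts → ℝ := fun x => ((x : (ℝ×ℝ)×ℕ).1 - ((φ x : (ℝ×ℝ)×ℕ)).1).2 with hdd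
      unfold cost
      split_ifs with hpinf
      · refine iSup_le fun x => ?_
        rw [hqnorm x]
        have h2 : (1/2:ℝ)^(m x) ≤ 1 := pow_le_one₀ (by norm_num) (by norm_num)
        have h1 : |d x| ≤ ε := le_trans (hbound x) (by nlinarith)
        calc ENNReal.ofReal |d x| ≤ ENNReal.ofReal ε := ENNReal.ofReal_le_ofReal h1
          _ = ENNReal.ofReal ε * 1 := (mul_one _).symm
          _ ≤ ENNReal.ofReal ε * 2 := mul_le_mul_right one_le_two _
      · set t := p.toReal with htdef
        have ht1 : 1 ≤ t := by
          rw [htdef, ← ENNReal.toReal_one]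
          exact (ENNReal.toReal_le_toReal (by simp) hpinf).mpr hp
        have ht0 : 0 < t := lt_of_lt_of_le one_pos ht1
        set S : Set X.pts := {x : X.pts | (x : (ℝ×ℝ)×ℕ).1 ≠ ((φ x : (ℝ×ℝ)×ℕ)).1} with hSdef
        set f : X.pts → ℝ≥0∞ := fun x => ENNReal.ofReal |d x| ^ t with hfdef
        set H : ℕ → ℝ≥0∞ := fun n => ENNReal.ofReal (ε^t) * ENNReal.ofReal ((1/2:ℝ)^n)
          with hHdef
        have hterm : ∀ x : X.pts, f x ≤ H (m x) := by
          intro x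
          have h1 : ENNReal.ofReal |d x| ≤ ENNReal.ofReal (ε * (1/2)^(m x)) :=
            ENNReal.ofReal_le_ofReal (hbound x)
          have hc0 : (0:ℝ) < (1/2:ℝ)^(m x) := by positivity
          have hc1 : ((1/2:ℝ))^(m x) ≤ 1 := pow_le_one₀ (by norm_num) (by norm_num)
          calc f x ≤ ENNReal.ofReal (ε * (1/2)^(m x)) ^ t :=
                ENNReal.rpow_le_rpow h1 ht0.le
            _ = ENNReal.ofReal ((ε * (1/2)^(m x)) ^ t) :=
                ENNReal.ofReal_rpow_of_nonneg (by positivity) ht0.le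
            _ = ENNReal.ofReal (ε^t * ((1/2:ℝ)^(m x)) ^ t) := by
                rw [Real.mul_rpow hε.le hc0.le]
            _ ≤ ENNReal.ofReal (ε^t * (1/2:ℝ)^(m x)) := by
                apply ENNReal.ofReal_le_ofReal
                apply mul_le_mul_of_nonneg_left _ (Real.rpow_nonneg hε.le t)
                calc ((1/2:ℝ)^(m x)) ^ t ≤ ((1/2:ℝ)^(m x)) ^ (1:ℝ) :=
                      Real.rpow_le_rpow_of_exponent_ge hc0 hc1 ht1
                  _ = (1/2:ℝ)^(m x) := Real.rpow_one _
            _ = H (m x) := by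
                simp only [hHdef]
                exact ENNReal.ofReal_mul (by positivity)
        have hf0 : ∀ x : ↑Sᶜ, f (x : X.pts) = 0 := by
          rintro ⟨x, hx⟩
          have hxS : (x : (ℝ×ℝ)×ℕ).1 = ((φ x : (ℝ×ℝ)×ℕ)).1 := not_not.mp hx
          have hdx : d x = 0 := by
            rw [hdd]
            simp [hxS]
          simp only [hfdef, hdx, abs_zero, ENNReal.ofReal_zero]
          exact ENNReal.zero_rpow_of_pos ht0
        have hinj' : Function.Injective (fun x : S => m (x : X.pts)) := by
          intro x y hxy
          exact Subtype.ext (hinj x.2 y.2 hxy)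
        have hHsum : ∑' n : ℕ, H n = ENNReal.ofReal (ε^t) * 2 := by
          rw [hHdef, ENNReal.tsum_mul_left]
          congr 1
          have h12 : ENNReal.ofReal ((1/2:ℝ)) = 2⁻¹ := by
            rw [ENNReal.ofReal_div_of_pos (by norm_num)]
            simp
          calc ∑' n : ℕ, ENNReal.ofReal ((1/2:ℝ)^n)
              = ∑' n : ℕ, (ENNReal.ofReal (1/2:ℝ))^n := by
                refine tsum_congr fun n => ?_
                rw [ENNReal.ofReal_pow (by norm_num)]
            _ = (1 - ENNReal.ofReal (1/2:ℝ))⁻¹ := ENNReal.tsum_geometric _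
            _ = 2 := by rw [h12, ENNReal.one_sub_inv_two, inv_inv]
        have hsum : (∑' x : X.pts, f x) ≤ ENNReal.ofReal (ε^t) * 2 := by
          rw [← Summable.tsum_add_tsum_compl (s := S) ENNReal.summable ENNReal.summable]
          have hcompl : ∑' x : ↑Sᶜ, f (x : X.pts) = 0 := by
            rw [tsum_congr hf0, tsum_zero]
          rw [hcompl, add_zero]
          calc ∑' x : S, f (x : X.pts) ≤ ∑' x : S, H (m (x : X.pts)) :=
                Summable.tsum_le_tsum (fun x => hterm _) ENNReal.summable ENNReal.summable
            _ ≤ ∑' n : ℕ, H n := ENNReal.tsum_comp_le_tsum_of_injective hinj' H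
            _ = ENNReal.ofReal (ε^t) * 2 := hHsum
        have hgoal : (∑' x : X.pts,
            ENNReal.ofReal (qnorm q ((x : (ℝ×ℝ)×ℕ).1 - ((φ x : (ℝ×ℝ)×ℕ)).1)) ^ t)
            = ∑' x : X.pts, f x := by
          refine tsum_congr fun x => ?_
          rw [hqnorm x]
        rw [hgoal]
        have h1t : (1:ℝ)/t ≤ 1 := by
          rw [div_le_one ht0]
          exact ht1
        calc (∑' x : X.pts, f x) ^ (1/t)
            ≤ (ENNReal.ofReal (ε^t) * 2) ^ (1/t) := ENNReal.rpow_le_rpow hsum (by positivity)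
          _ = ENNReal.ofReal (ε^t) ^ (1/t) * 2 ^ (1/t) :=
              ENNReal.mul_rpow_of_nonneg _ _ (by positivity)
          _ = ENNReal.ofReal ε * 2 ^ (1/t) := by
              rw [← ENNReal.ofReal_rpow_of_nonneg hε.le ht0.le, ← ENNReal.rpow_mul,
                mul_one_div, div_self ht0.ne', ENNReal.rpow_one]
          _ ≤ ENNReal.ofReal ε * 2 ^ (1:ℝ) :=
              mul_le_mul_right (ENNReal.rpow_le_rpow_of_exponent_le one_le_two h1t) _
          _ = ENNReal.ofReal ε * 2 := by rw [ENNReal.rpow_one]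
    refine ENNReal.le_of_forall_pos_le_add fun η hη _ => ?_
    rw [zero_add]
    have hη' : (0:ℝ) < (η : ℝ) := hη
    have hε0 : (0:ℝ) < min ((η:ℝ)/2) (1/2) := lt_min (by positivity) (by norm_num)
    have hε1 : min ((η:ℝ)/2) (1/2) ≤ 1 := le_trans (min_le_right _ _) (by norm_num)
    calc pdist p q X Y ≤ ENNReal.ofReal (min ((η:ℝ)/2) (1/2)) * 2 := key _ hε0 hε1
      _ ≤ ((η : ℝ≥0∞)/2) * 2 := by
          apply mul_le_mul_left
          refine le_trans (ENNReal.ofReal_le_ofReal (min_le_left _ _)) ?_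
          rw [ENNReal.ofReal_div_of_pos (by norm_num), ENNReal.ofReal_coe_nnreal]
          simp
      _ = (η : ℝ≥0∞) := ENNReal.div_mul_cancel two_ne_zero (by norm_num)
end
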